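/- arXiv:1901.01978 — 7 statements merged into one kernel-verified Lean document; each statement's English description precedes it below -/
import Mathlib

section
/- Fix an integer N ≥ 2, functions F₁,…,F_N : ℝ → ℝ, a vector u* ∈ ℝ^N, and for each i a vector u^{(i)} ∈ ℝ^N. Set Hᵢ := Σ_{j≠i} F_j(u^{(i)}_j), H_max := max_i Hᵢ, F_total := Σ_{j=1}^N F_j(u*_j), and for a constant c ∈ ℝ define the Scaled VCG payment pᵢ(c) := c·Hᵢ − Σ_{j≠i} F_j(u*_j). If F_total > 0, Hᵢ > 0 for all i, and the Market Power Balance condition (N−1)·H_max ≤ Σᵢ Hᵢ holds, then (N−1)·F_total/Σᵢ Hᵢ ≤ F_total/H_max, and every c with (N−1)·F_total/Σᵢ Hᵢ ≤ c ≤ F_total/H_max satisfies budget balance Σᵢ pᵢ(c) ≥ 0 and individual rationality Fᵢ(u*_i) − pᵢ(c) ≥ 0 for every agent i. -/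
open Finset

/-- **Scaled VCG for static deterministic systems (Theorem 1).**
If `F_total > 0`, `Hᵢ > 0` for all `i`, and the Market Power Balance condition
`(N−1)·H_max ≤ Σᵢ Hᵢ` holds, then `(N−1)·F_total/Σᵢ Hᵢ ≤ F_total/H_max`, and every
scaling factor `c` in that interval yields budget balance and individual rationality. -/
theorem scaled_vcg_static
    (N : ℕ) (hN : 2 ≤ N)
    (F : Fin N → ℝ → ℝ) (ustar : Fin N → ℝ) (uexc : Fin N → Fin N → ℝ)
    (H : Fin N → ℝ)
    (hH : ∀ i, H i = ∑ j ∈ Finset.univ.erase i, F j (uexc i j))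
    (Hmax : ℝ)
    (hHmax : Hmax = Finset.univ.sup' ⟨⟨0, by omega⟩, Finset.mem_univ _⟩ H)
    (Ftotal : ℝ)
    (hFtotal : Ftotal = ∑ j, F j (ustar j))
    (p : Fin N → ℝ → ℝ)
    (hp : ∀ i c, p i c = c * H i - ∑ j ∈ Finset.univ.erase i, F j (ustar j))
    (hFpos : 0 < Ftotal)
    (hHpos : ∀ i, 0 < H i)
    (hMPB : ((N : ℝ) - 1) * Hmax ≤ ∑ i, H i) :
    ((N : ℝ) - 1) * Ftotal / (∑ i, H i) ≤ Ftotal / Hmax ∧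
      ∀ c : ℝ, ((N : ℝ) - 1) * Ftotal / (∑ i, H i) ≤ c → c ≤ Ftotal / Hmax →
        (0 ≤ ∑ i, p i c) ∧ ∀ i, 0 ≤ F i (ustar i) - p i c := by
  have hHmaxle : ∀ i, H i ≤ Hmax := by
    intro i; rw [hHmax]; exact Finset.le_sup' H (Finset.mem_univ i)
  have hHmaxpos : 0 < Hmax := lt_of_lt_of_le (hHpos ⟨0, by omega⟩) (hHmaxle _)
  have : Nonempty (Fin N) := ⟨⟨0, by omega⟩⟩
  have hSumpos : 0 < ∑ i, H i :=
    Finset.sum_pos (fun i _ => hHpos i) Finset.univ_nonempty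
  have hN1 : (0:ℝ) ≤ (N:ℝ) - 1 := by
    have : (2:ℝ) ≤ (N:ℝ) := by exact_mod_cast hN
    linarith
  -- key identity: Σᵢ Σ_{j≠i} F_j(u*_j) = (N−1) Ftotal
  have hkey : ∀ i : Fin N, (∑ j ∈ Finset.univ.erase i, F j (ustar j)) = Ftotal - F i (ustar i) := by
    intro i
    rw [hFtotal, ← Finset.sum_erase_add _ _ (Finset.mem_univ i)]
    ring
  have hkeysum : (∑ i, ∑ j ∈ Finset.univ.erase i, F j (ustar j)) = ((N : ℝ) - 1) * Ftotal := by
    simp only [hkey]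
    rw [Finset.sum_sub_distrib, Finset.sum_const, ← hFtotal]
    simp [Finset.card_univ]
    ring
  constructor
  · rw [div_le_div_iff₀ hSumpos hHmaxpos]
    calc ((N : ℝ) - 1) * Ftotal * Hmax = ((N : ℝ) - 1) * Hmax * Ftotal := by ring
      _ ≤ (∑ i, H i) * Ftotal := by
          exact mul_le_mul_of_nonneg_right hMPB hFpos.le
      _ = Ftotal * (∑ i, H i) := by ring
  · intro c hc1 hc2
    have hcpos : 0 ≤ c := le_trans (div_nonneg (mul_nonneg hN1 hFpos.le) hSumpos.le) hc1
    constructor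
    · simp only [hp, Finset.sum_sub_distrib, ← Finset.mul_sum, hkeysum]
      rw [sub_nonneg, ← div_le_iff₀ hSumpos] at *
      linarith [hc1]
    · intro i
      rw [hp, hkey]
      have h1 : c * H i ≤ c * Hmax := mul_le_mul_of_nonneg_left (hHmaxle i) hcpos
      have h2 : c * Hmax ≤ Ftotal := by
        rw [← le_div_iff₀ hHmaxpos] at *; linarith [hc2]
      linarith
end

section
/- Let a : ℕ → ℝ and b : ℕ → ℝ be sequences with a̲ ≤ aᵢ ≤ ā < 0 and 0 < b̲ ≤ bᵢ ≤ b̄ for all i ≥ 1. For each N ≥ 2 let U*(N) ∈ ℝ^N be the unique maximizer of Σ_{i=1}^N (aᵢuᵢ² + bᵢuᵢ) subject to Σ_{i=1}^N uᵢ = 0, and let W*(N) ∈ ℝ^{N−1} (indexed by agents 2,…,N) be the unique maximizer of Σ_{i=2}^N (aᵢuᵢ² + bᵢuᵢ) subject to Σ_{i=2}^N uᵢ = 0. Then max_{2 ≤ j ≤ N} |U*(N)ⱼ − W*(N)ⱼ| → 0 as N → ∞; in fact max_{2 ≤ j ≤ N} |U*(N)ⱼ − W*(N)ⱼ| = O(1/N).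 -/
open Finset Filter

lemma stationary_aux (a b : ℕ → ℝ) (s : Finset ℕ) (Uu : ℕ → ℝ)
    (ha : ∀ i ∈ s, a i < 0)
    (hfeas : ∑ j ∈ s, Uu j = 0)
    (hopt : ∀ v : ℕ → ℝ, ∑ j ∈ s, v j = 0 →
      ∑ j ∈ s, (a j * v j ^ 2 + b j * v j) ≤ ∑ j ∈ s, (a j * Uu j ^ 2 + b j * Uu j))
    {j k : ℕ} (hj : j ∈ s) (hk : k ∈ s) :
    2 * a j * Uu j + b j = 2 * a k * Uu k + b k := by
  rcases eq_or_ne j k with rfl | hjk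
  · rfl
  set c := (2 * a j * Uu j + b j) - (2 * a k * Uu k + b k) with hc
  have key : ∀ t : ℝ, c * t + (a j + a k) * t ^ 2 ≤ 0 := by
    intro t
    set v : ℕ → ℝ := fun i => Uu i + (if i = j then t else 0) - (if i = k then t else 0) with hv
    have hvfeas : ∑ i ∈ s, v i = 0 := by
      simp only [hv, Finset.sum_sub_distrib, Finset.sum_add_distrib,
        Finset.sum_ite_eq' s, hj, hk, if_pos, hfeas]
      ring
    have h1 := hopt v hvfeas
    have h2 : ∑ i ∈ s, ((a i * v i ^ 2 + b i * v i) - (a i * Uu i ^ 2 + b i * Uu i))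
        = c * t + (a j + a k) * t ^ 2 := by
      rw [Finset.sum_eq_add_of_mem j k hj hk hjk]
      · have hvj : v j = Uu j + t := by simp [hv, hjk]
        have hvk : v k = Uu k - t := by simp [hv, Ne.symm hjk]
        rw [hvj, hvk, hc]; ring
      · intro i _ hij
        have : v i = Uu i := by simp [hv, hij.1, hij.2]
        rw [this]; ring
    rw [Finset.sum_sub_distrib] at h2
    linarith
  have hd : a j + a k < 0 := by have := ha j hj; have := ha k hk; linarith
  have h0 := key (-c / (2 * (a j + a k)))
  have hne : (a j + a k) ≠ 0 := ne_of_lt hd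
  have hEq : c * (-c/(2*(a j+a k))) + (a j+a k) * (-c/(2*(a j+a k)))^2
      = -c^2/(4*(a j+a k)) := by field_simp; ring
  rw [hEq] at h0
  have h1 : 0 ≤ -c^2/(4*(a j+a k)) :=
    div_nonneg_of_nonpos (by nlinarith [sq_nonneg c]) (by linarith)
  have h2 : -c^2/(4*(a j+a k)) = 0 := le_antisymm h0 h1
  have hc2 : c^2 = 0 := by
    rcases div_eq_zero_iff.mp h2 with h | h
    · linarith
    · exfalso; apply hne; linarith
  have : c = 0 := by nlinarith [sq_nonneg c]
  linarith

set_option maxHeartbeats 1000000 in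
/-- **Lemma 1.** For quadratic agents `Fᵢ(u) = aᵢu² + bᵢu` with coefficients uniformly
bounded (`a̲ ≤ aᵢ ≤ ā < 0`, `0 < b̲ ≤ bᵢ ≤ b̄`), if `U*(N)` is the maximizer of the
balanced social-welfare problem over agents `1,…,N` and `W*(N)` the maximizer of the
problem over agents `2,…,N`, then `max_{2 ≤ j ≤ N} |U*(N)ⱼ − W*(N)ⱼ| → 0` as `N → ∞`,
and in fact this maximum is `O(1/N)`. -/
theorem removal_of_one_agent_perturbs_allocation_O_one_over_N
    (a b : ℕ → ℝ) (alo ahi blo bhi : ℝ)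
    (ha : ∀ i, 1 ≤ i → alo ≤ a i ∧ a i ≤ ahi) (hahi : ahi < 0)
    (hb : ∀ i, 1 ≤ i → blo ≤ b i ∧ b i ≤ bhi) (hblo : 0 < blo)
    (U W : ℕ → ℕ → ℝ)
    (hUfeas : ∀ N, 2 ≤ N → ∑ j ∈ Finset.Icc 1 N, U N j = 0)
    (hUopt : ∀ N, 2 ≤ N → ∀ v : ℕ → ℝ, ∑ j ∈ Finset.Icc 1 N, v j = 0 →
      ∑ j ∈ Finset.Icc 1 N, (a j * v j ^ 2 + b j * v j) ≤
        ∑ j ∈ Finset.Icc 1 N, (a j * U N j ^ 2 + b j * U N j))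
    (hWfeas : ∀ N, 2 ≤ N → ∑ j ∈ Finset.Icc 2 N, W N j = 0)
    (hWopt : ∀ N, 2 ≤ N → ∀ v : ℕ → ℝ, ∑ j ∈ Finset.Icc 2 N, v j = 0 →
      ∑ j ∈ Finset.Icc 2 N, (a j * v j ^ 2 + b j * v j) ≤
        ∑ j ∈ Finset.Icc 2 N, (a j * W N j ^ 2 + b j * W N j)) :
    (∀ ε : ℝ, 0 < ε → ∃ N₀ : ℕ, ∀ N, N₀ ≤ N → ∀ j ∈ Finset.Icc 2 N,
        |U N j - W N j| < ε) ∧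
      ∃ C : ℝ, ∀ N, 2 ≤ N → ∀ j ∈ Finset.Icc 2 N,
        |U N j - W N j| ≤ C / N := by
  have halo : alo < 0 := lt_of_le_of_lt (ha 1 le_rfl).1 (lt_of_le_of_lt (ha 1 le_rfl).2 hahi)
  set C : ℝ := (bhi - blo) * (-alo) / (2 * ahi ^ 2) with hCdef
  have main : ∀ N, 2 ≤ N → ∀ j ∈ Finset.Icc 2 N, |U N j - W N j| ≤ C / N := by
    intro N hN j hjmem
    -- basic membership facts
    have h1mem : (1 : ℕ) ∈ Finset.Icc 1 N := by simp; omega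
    have h2mem1 : (2 : ℕ) ∈ Finset.Icc 1 N := by simp; omega
    have h2mem2 : (2 : ℕ) ∈ Finset.Icc 2 N := by simp; omega
    have hjmem1 : j ∈ Finset.Icc 1 N := by
      simp only [Finset.mem_Icc] at hjmem ⊢; omega
    have haneg1 : ∀ i ∈ Finset.Icc 1 N, a i < 0 := by
      intro i hi
      simp only [Finset.mem_Icc] at hi
      exact lt_of_le_of_lt (ha i hi.1).2 hahi
    have haneg2 : ∀ i ∈ Finset.Icc 2 N, a i < 0 := by
      intro i hi
      simp only [Finset.mem_Icc] at hi
      exact haneg1 i (by simp; omega)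
    -- stationarity
    set lam := 2 * a 2 * U N 2 + b 2 with hlam
    set mu := 2 * a 2 * W N 2 + b 2 with hmu
    have hUstat : ∀ i ∈ Finset.Icc 1 N, 2 * a i * U N i + b i = lam := fun i hi =>
      stationary_aux a b _ (U N) haneg1 (hUfeas N hN) (hUopt N hN) hi h2mem1
    have hWstat : ∀ i ∈ Finset.Icc 2 N, 2 * a i * W N i + b i = mu := fun i hi =>
      stationary_aux a b _ (W N) haneg2 (hWfeas N hN) (hWopt N hN) hi h2mem2
    -- explicit formulas
    have haNe : ∀ i ∈ Finset.Icc 1 N, a i ≠ 0 := fun i hi => ne_of_lt (haneg1 i hi)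
    have hUform : ∀ i ∈ Finset.Icc 1 N, U N i = (lam - b i) / (2 * a i) := by
      intro i hi
      have h := hUstat i hi
      have hne := haNe i hi
      field_simp
      linarith
    have hWform : ∀ i ∈ Finset.Icc 2 N, W N i = (mu - b i) / (2 * a i) := by
      intro i hi
      have h := hWstat i hi
      have hne : a i ≠ 0 := ne_of_lt (haneg2 i hi)
      field_simp
      linarith
    -- sums
    set s1 := ∑ i ∈ Finset.Icc 1 N, 1 / (2 * a i) with hs1
    set s2 := ∑ i ∈ Finset.Icc 2 N, 1 / (2 * a i) with hs2
    set t1 := ∑ i ∈ Finset.Icc 1 N, b i / (2 * a i) with ht1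
    set t2 := ∑ i ∈ Finset.Icc 2 N, b i / (2 * a i) with ht2
    have hA : lam * s1 = t1 := by
      have h0 : ∑ i ∈ Finset.Icc 1 N, (lam - b i) / (2 * a i) = 0 := by
        rw [← hUfeas N hN]
        exact Finset.sum_congr rfl fun i hi => (hUform i hi).symm
      have : ∑ i ∈ Finset.Icc 1 N, (lam - b i) / (2 * a i)
          = lam * s1 - t1 := by
        rw [hs1, ht1, Finset.mul_sum, ← Finset.sum_sub_distrib]
        exact Finset.sum_congr rfl fun i hi => by
          have := haNe i hi; field_simp
      linarith [this ▸ h0]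
    have hB : mu * s2 = t2 := by
      have h0 : ∑ i ∈ Finset.Icc 2 N, (mu - b i) / (2 * a i) = 0 := by
        rw [← hWfeas N hN]
        exact Finset.sum_congr rfl fun i hi => (hWform i hi).symm
      have : ∑ i ∈ Finset.Icc 2 N, (mu - b i) / (2 * a i)
          = mu * s2 - t2 := by
        rw [hs2, ht2, Finset.mul_sum, ← Finset.sum_sub_distrib]
        exact Finset.sum_congr rfl fun i hi => by
          have : a i ≠ 0 := ne_of_lt (haneg2 i hi); field_simp
      linarith [this ▸ h0]
    -- split sums
    have hins : Finset.Icc 1 N = insert 1 (Finset.Icc 2 N) := by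
      ext x; simp [Finset.mem_Icc]; omega
    have h1not : (1 : ℕ) ∉ Finset.Icc 2 N := by simp
    have hs : s1 = 1 / (2 * a 1) + s2 := by
      rw [hs1, hins, Finset.sum_insert h1not]
    have ht : t1 = b 1 * (1 / (2 * a 1)) + t2 := by
      rw [ht1, hins, Finset.sum_insert h1not]
      congr 1
      field_simp
    -- key identity
    have eq1 : (lam - mu) * s1 = (b 1 - mu) * (1 / (2 * a 1)) := by
      linear_combination hA - hB - mu * hs + ht
    -- bounds on mu
    have hs2neg : s2 < 0 := by
      rw [hs2]
      apply Finset.sum_neg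
      · intro i hi
        have := haneg2 i hi
        apply div_neg_of_pos_of_neg one_pos
        linarith
      · exact Finset.nonempty_Icc.mpr hN
    have hbmem : ∀ i ∈ Finset.Icc 2 N, blo ≤ b i ∧ b i ≤ bhi := by
      intro i hi
      simp only [Finset.mem_Icc] at hi
      exact hb i (by omega)
    have hmulo : blo ≤ mu := by
      have ht2le : t2 ≤ blo * s2 := by
        rw [ht2, hs2, Finset.mul_sum]
        apply Finset.sum_le_sum
        intro i hi
        have hai := haneg2 i hi
        have hbi := (hbmem i hi).1
        have h2ai : 1 / (2 * a i) < 0 := div_neg_of_pos_of_neg one_pos (by linarith)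
        have : b i * (1 / (2 * a i)) ≤ blo * (1 / (2 * a i)) :=
          mul_le_mul_of_nonpos_right hbi (le_of_lt h2ai)
        calc b i / (2 * a i) = b i * (1 / (2 * a i)) := by ring
          _ ≤ blo * (1 / (2 * a i)) := this
      nlinarith [hB, ht2le]
    have hmuhi : mu ≤ bhi := by
      have ht2ge : bhi * s2 ≤ t2 := by
        rw [ht2, hs2, Finset.mul_sum]
        apply Finset.sum_le_sum
        intro i hi
        have hai := haneg2 i hi
        have hbi := (hbmem i hi).2
        have h2ai : 1 / (2 * a i) < 0 := div_neg_of_pos_of_neg one_pos (by linarith)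
        have : bhi * (1 / (2 * a i)) ≤ b i * (1 / (2 * a i)) :=
          mul_le_mul_of_nonpos_right hbi (le_of_lt h2ai)
        calc bhi * (1 / (2 * a i)) ≤ b i * (1 / (2 * a i)) := this
          _ = b i / (2 * a i) := by ring
      nlinarith [hB, ht2ge]
    -- bound on |b 1 - mu|
    have hb1 := hb 1 le_rfl
    have habs_b : |b 1 - mu| ≤ bhi - blo := by
      rw [abs_le]; constructor <;> linarith
    -- bound on s1
    have ha1 := ha 1 le_rfl
    have ha1neg : a 1 < 0 := lt_of_le_of_lt ha1.2 hahi
    have hs1le : s1 ≤ (N : ℝ) * (1 / (2 * alo)) := by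
      rw [hs1]
      calc ∑ i ∈ Finset.Icc 1 N, 1 / (2 * a i)
          ≤ ∑ _i ∈ Finset.Icc 1 N, 1 / (2 * alo) := by
            apply Finset.sum_le_sum
            intro i hi
            have hai := haneg1 i hi
            have hlo : alo ≤ a i := (ha i (by simpa using (Finset.mem_Icc.mp hi).1)).1
            exact one_div_le_one_div_of_neg_of_le (by linarith) (by linarith)
        _ = (N : ℝ) * (1 / (2 * alo)) := by
            rw [Finset.sum_const, Nat.card_Icc, nsmul_eq_mul]
            norm_num
    have hNpos : (0 : ℝ) < N := by positivity
    have halo2 : (0 : ℝ) < 2 * (-alo) := by linarith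
    have hahi2 : (0 : ℝ) < 2 * (-ahi) := by linarith
    have hs1neg : (N : ℝ) / (2 * (-alo)) ≤ -s1 := by
      rw [div_le_iff₀ halo2]
      have heq : (N : ℝ) * (1 / (2 * alo)) * (2 * alo) = N := by
        have h2alo : (2 : ℝ) * alo ≠ 0 := by linarith
        field_simp
        exact div_self (ne_of_lt halo)
      have h' : (N : ℝ) ≤ s1 * (2 * alo) := by
        calc (N : ℝ) = N * (1 / (2 * alo)) * (2 * alo) := heq.symm
          _ ≤ s1 * (2 * alo) := mul_le_mul_of_nonpos_right hs1le (by linarith)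
      have hring : -s1 * (2 * (-alo)) = s1 * (2 * alo) := by ring
      linarith
    have hs1pos : (0 : ℝ) < (N : ℝ) / (2 * (-alo)) := div_pos hNpos halo2
    -- bound on |lam - mu| * (-s1)
    have hlhs : |lam - mu| * (-s1) ≤ (bhi - blo) / (2 * (-ahi)) := by
      have habs : |lam - mu| * |s1| = |b 1 - mu| * |1 / (2 * a 1)| := by
        rw [← abs_mul, ← abs_mul, eq1]
      have h1 : |s1| = -s1 := abs_of_neg (by linarith)
      have h2 : |1 / (2 * a 1)| = 1 / (2 * (-a 1)) := by
        rw [abs_div, abs_one, abs_of_neg (by linarith : 2 * a 1 < 0)]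
        ring_nf
      rw [h1, h2] at habs
      rw [habs]
      have hd1 : 1 / (2 * (-a 1)) ≤ 1 / (2 * (-ahi)) :=
        one_div_le_one_div_of_le hahi2 (by linarith [ha1.2])
      calc |b 1 - mu| * (1 / (2 * (-a 1)))
          ≤ (bhi - blo) * (1 / (2 * (-ahi))) :=
            mul_le_mul habs_b hd1 (le_of_lt (div_pos one_pos (by linarith))) (by linarith [hblo, hb1.1, hb1.2])
        _ = (bhi - blo) / (2 * (-ahi)) := by ring
    -- bound on |lam - mu|
    set A := (bhi - blo) / (2 * (-ahi)) with hAdef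
    have hDle : |lam - mu| ≤ A * (2 * (-alo)) / N := by
      rw [le_div_iff₀ hNpos]
      have step : |lam - mu| * ((N : ℝ) / (2 * (-alo))) ≤ A := by
        calc |lam - mu| * ((N : ℝ) / (2 * (-alo)))
            ≤ |lam - mu| * (-s1) := mul_le_mul_of_nonneg_left hs1neg (abs_nonneg _)
          _ ≤ A := hlhs
      have heq : |lam - mu| * ((N : ℝ) / (2 * (-alo))) * (2 * (-alo)) = |lam - mu| * N := by
        rw [mul_assoc, div_mul_cancel₀ _ (show (2:ℝ) * (-alo) ≠ 0 by linarith)]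
      calc |lam - mu| * N = |lam - mu| * ((N : ℝ) / (2 * (-alo))) * (2 * (-alo)) := heq.symm
        _ ≤ A * (2 * (-alo)) := mul_le_mul_of_nonneg_right step (le_of_lt halo2)
    -- relate U - W to lam - mu
    have hajneg : a j < 0 := haneg2 j hjmem
    have hajhi : a j ≤ ahi := (ha j (by simp only [Finset.mem_Icc] at hjmem; omega)).2
    have hEeq : 2 * a j * (U N j - W N j) = lam - mu := by
      have h1 := hUstat j hjmem1
      have h2 := hWstat j hjmem
      linear_combination h1 - h2
    have e1 : |lam - mu| = (2 * (-a j)) * |U N j - W N j| := by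
      rw [← hEeq, abs_mul, abs_of_neg (by linarith : 2 * a j < 0)]
      ring
    have habsE : 2 * (-ahi) * |U N j - W N j| ≤ |lam - mu| := by
      rw [e1]
      exact mul_le_mul_of_nonneg_right (by linarith) (abs_nonneg _)
    have hfin : |U N j - W N j| ≤ (A * (2 * (-alo)) / N) / (2 * (-ahi)) := by
      rw [le_div_iff₀ hahi2]
      calc |U N j - W N j| * (2 * (-ahi)) = 2 * (-ahi) * |U N j - W N j| := by ring
        _ ≤ |lam - mu| := habsE
        _ ≤ A * (2 * (-alo)) / N := hDle
    have hCeq : (A * (2 * (-alo)) / N) / (2 * (-ahi)) = C / N := by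
      rw [hAdef, hCdef]
      field_simp
    linarith [hCeq ▸ hfin]
  constructor
  · intro eps heps
    refine ⟨max 2 (Nat.ceil (C / eps) + 1), fun N hN0 j hj => ?_⟩
    have hN2 : 2 ≤ N := le_trans (le_max_left _ _) hN0
    have hmain := main N hN2 j hj
    have hceil : Nat.ceil (C / eps) < N := by
      have := le_trans (le_max_right 2 _) hN0
      omega
    have hNc : ((Nat.ceil (C / eps) : ℕ) : ℝ) < (N : ℝ) := by exact_mod_cast hceil
    have h1 : C / eps < N := lt_of_le_of_lt (Nat.le_ceil _) hNc
    have hNpos : (0 : ℝ) < N := by positivity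
    have h2 : C / N < eps := by
      rw [div_lt_iff₀ hNpos]
      rw [div_lt_iff₀ heps] at h1
      nlinarith
    linarith
  · exact ⟨C, main⟩
end

section
/- Let a : ℕ → ℝ and b : ℕ → ℝ be sequences with a̲ ≤ aᵢ ≤ ā < 0 and 0 < b̲ ≤ bᵢ ≤ b̄ for all i ≥ 1. For each N ≥ 2 let F_total(N) be the optimal value of: maximize Σ_{i=1}^N (aᵢuᵢ² + bᵢuᵢ) subject to Σ_{i=1}^N uᵢ = 0, and for each i ≤ N let Hᵢ(N) be the optimal value of the analogous problem over the agents j ≤ N with j ≠ i, subject to Σ_{j≠i} u_j = 0. Assume that for every N: F_total(N) > 0, Hᵢ(N) > 0 for all i ≤ N, and (N−1)·max_{i≤N} Hᵢ(N) ≤ Σ_{i=1}^N Hᵢ(N). Then lim_{N→∞} (N−1)·F_total(N)/Σ_{i=1}^N Hᵢ(N) = 1 and lim_{N→∞} F_total(N)/max_{i≤N} Hᵢ(N) = 1; consequently any sequence c^N with (N−1)·F_total(N)/ΣᵢHᵢ(N) ≤ c^N ≤ F_total(N)/max_i Hᵢ(N) satisfies lim_{N→∞} c^N = 1. -/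
open Finset Filter


lemma sum_quad_le (a b u : ℕ → ℝ) (s : Finset ℕ) (ha : ∀ j ∈ s, a j < 0) (μ : ℝ)
    (hu : ∑ j ∈ s, u j = 0) :
    ∑ j ∈ s, (a j * u j ^ 2 + b j * u j) ≤ ∑ j ∈ s, (b j - μ)^2 / (-(4 * a j)) := by
  have h : ∑ j ∈ s, (a j * u j ^ 2 + b j * u j)
      = ∑ j ∈ s, (a j * u j ^ 2 + (b j - μ) * u j) + μ * ∑ j ∈ s, u j := by
    rw [Finset.mul_sum, ← Finset.sum_add_distrib]
    exact Finset.sum_congr rfl (fun j _ => by ring)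
  rw [h, hu, mul_zero, add_zero]
  apply Finset.sum_le_sum
  intro j hj
  have haj := ha j hj
  have hane : a j ≠ 0 := haj.ne
  have key : (b j - μ)^2 / (-(4 * a j)) - (a j * u j ^ 2 + (b j - μ) * u j)
      = (-(a j)) * (u j + (b j - μ)/(2 * a j))^2 := by
    field_simp
    ring
  nlinarith [mul_nonneg (neg_nonneg.2 haj.le) (sq_nonneg (u j + (b j - μ)/(2 * a j)))]

lemma key_bounds (a b : ℕ → ℝ) (alo ahi : ℝ)
    (ha : ∀ i, 1 ≤ i → alo ≤ a i ∧ a i ≤ ahi) (hahi : ahi < 0)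
    (Ftot : ℕ → ℝ) (H : ℕ → ℕ → ℝ) (N : ℕ) (hN : 2 ≤ N)
    (hFtotN : IsGreatest {v : ℝ | ∃ u : ℕ → ℝ, ∑ j ∈ Finset.Icc 1 N, u j = 0 ∧
        v = ∑ j ∈ Finset.Icc 1 N, (a j * u j ^ 2 + b j * u j)} (Ftot N))
    (hHN : ∀ i ∈ Finset.Icc 1 N, IsGreatest
      {v : ℝ | ∃ u : ℕ → ℝ, ∑ j ∈ (Finset.Icc 1 N).erase i, u j = 0 ∧
        v = ∑ j ∈ (Finset.Icc 1 N).erase i, (a j * u j ^ 2 + b j * u j)} (H N i)) :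
    (∑ i ∈ Finset.Icc 1 N, H N i ≤ ((N:ℝ) - 1) * Ftot N) ∧
    (Ftot N * (((N:ℝ) - 1) - (alo/ahi)/((N:ℝ)-1)) ≤ ∑ i ∈ Finset.Icc 1 N, H N i) := by
  have hN1 : 1 ≤ N := le_trans (by norm_num) hN
  set s := Finset.Icc 1 N with hs
  have hcard : s.card = N := by simp [hs]
  have h1s : (1 : ℕ) ∈ s := by simp [hs]; omega
  have hs_ne : s.Nonempty := ⟨1, h1s⟩
  have hmem1 : ∀ j ∈ s, 1 ≤ j := fun j hj => (Finset.mem_Icc.mp hj).1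
  have haneg : ∀ j ∈ s, a j < 0 := fun j hj => lt_of_le_of_lt (ha j (hmem1 j hj)).2 hahi
  have hane : ∀ j ∈ s, a j ≠ 0 := fun j hj => (haneg j hj).ne
  have hn1pos : (0:ℝ) < (N:ℝ) - 1 := by
    have : (2:ℝ) ≤ (N:ℝ) := by exact_mod_cast hN
    linarith
  set S := ∑ j ∈ s, (a j)⁻¹ with hS
  have hSneg : S < 0 := Finset.sum_neg (fun j hj => inv_neg''.mpr (haneg j hj)) hs_ne
  set lam := (∑ j ∈ s, b j / a j) / S with hlam
  have hlamS : lam * S = ∑ j ∈ s, b j / a j := div_mul_cancel₀ _ hSneg.ne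
  set u0 : ℕ → ℝ := fun j => (lam - b j) / (2 * a j) with hu0
  have h2au : ∀ j ∈ s, 2 * a j * u0 j = lam - b j := by
    intro j hj
    have h2ne : (2: ℝ) * a j ≠ 0 := by
      have := hane j hj
      positivity
    show 2 * a j * ((lam - b j) / (2 * a j)) = lam - b j
    rw [mul_comm, div_mul_cancel₀ _ h2ne]
  have hsum0 : ∑ j ∈ s, u0 j = 0 := by
    have hp : ∀ j ∈ s, u0 j = (lam * (a j)⁻¹ - b j / a j) / 2 := by
      intro j hj
      have hne := hane j hj
      show (lam - b j) / (2 * a j) = (lam * (a j)⁻¹ - b j / a j) / 2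
      rw [mul_comm 2 (a j), ← div_div, sub_div, div_eq_mul_inv lam (a j)]
    rw [Finset.sum_congr rfl hp, ← Finset.sum_div, Finset.sum_sub_distrib, ← Finset.mul_sum,
      ← hS, hlamS, sub_self, zero_div]
  set F' := ∑ j ∈ s, (-(a j)) * u0 j ^ 2 with hF'
  have hpt : ∀ j ∈ s, a j * u0 j ^ 2 + b j * u0 j = lam * u0 j + (-(a j)) * u0 j ^ 2 := by
    intro j hj
    linear_combination u0 j * h2au j hj
  have hval : ∑ j ∈ s, (a j * u0 j ^ 2 + b j * u0 j) = F' := by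
    rw [Finset.sum_congr rfl hpt, Finset.sum_add_distrib, ← Finset.mul_sum, hsum0, mul_zero,
      zero_add]
  have hg : ∀ j ∈ s, (b j - lam)^2 / (-(4 * a j)) = (-(a j)) * u0 j ^ 2 := by
    intro j hj
    have h1 := h2au j hj
    have h2 : b j - lam = -(2 * a j * u0 j) := by linarith
    have h3 := hane j hj
    rw [h2]
    field_simp
    ring
  have hsg : ∑ j ∈ s, (b j - lam)^2 / (-(4 * a j)) = F' := Finset.sum_congr rfl hg
  have hFge : F' ≤ Ftot N := hFtotN.2 ⟨u0, hsum0, hval.symm⟩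
  have hFle : Ftot N ≤ F' := by
    obtain ⟨u, hu0', huv⟩ := hFtotN.1
    rw [huv, ← hsg]
    exact sum_quad_le a b u s haneg lam hu0'
  have hFeq : Ftot N = F' := le_antisymm hFle hFge
  -- upper bound on H
  have hHub : ∀ i ∈ s, H N i ≤ F' - (-(a i)) * u0 i ^ 2 := by
    intro i hi
    obtain ⟨u, hu0', huv⟩ := (hHN i hi).1
    rw [huv]
    have h1 : ∑ j ∈ s.erase i, (a j * u j ^ 2 + b j * u j)
        ≤ ∑ j ∈ s.erase i, (b j - lam)^2 / (-(4 * a j)) :=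
      sum_quad_le a b u _ (fun j hj => haneg j (Finset.mem_of_mem_erase hj)) lam hu0'
    have h2 := Finset.add_sum_erase s (fun j => (b j - lam)^2 / (-(4 * a j))) hi
    have h3 := hg i hi
    linarith
  have hP1 : ∑ i ∈ s, H N i ≤ ((N:ℝ) - 1) * Ftot N := by
    have h1 : ∑ i ∈ s, H N i ≤ ∑ i ∈ s, (F' - (-(a i)) * u0 i ^ 2) := Finset.sum_le_sum hHub
    have h2 : ∑ i ∈ s, (F' - (-(a i)) * u0 i ^ 2) = (N:ℝ) * F' - F' := by
      rw [Finset.sum_sub_distrib, Finset.sum_const, hcard, nsmul_eq_mul, ← hF']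
    rw [hFeq]
    linarith
  -- lower bound on H
  have hHlb : ∀ i ∈ s, F' + a i * u0 i ^ 2 + alo * u0 i ^ 2 / ((N:ℝ) - 1) ≤ H N i := by
    intro i hi
    have hcardE : ((s.erase i).card : ℝ) = (N:ℝ) - 1 := by
      rw [Finset.card_erase_of_mem hi, hcard]
      have : (1:ℕ) ≤ N := hN1
      push_cast [Nat.cast_sub this]
      ring
    set t := u0 i / ((N:ℝ) - 1) with ht
    set v : ℕ → ℝ := fun j => u0 j + t with hv
    have hsumE : ∑ j ∈ s.erase i, u0 j = - u0 i := by
      have := Finset.add_sum_erase s u0 hi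
      linarith [hsum0]
    have hvsum : ∑ j ∈ s.erase i, v j = 0 := by
      simp only [hv]
      rw [Finset.sum_add_distrib, Finset.sum_const, nsmul_eq_mul, hsumE, hcardE, ht]
      field_simp
      ring
    have hpt2 : ∀ j ∈ s.erase i, a j * v j ^ 2 + b j * v j
        = (lam * u0 j + (-(a j)) * u0 j ^ 2) + lam * t + a j * t ^ 2 := by
      intro j hj
      have h1 := h2au j (Finset.mem_of_mem_erase hj)
      simp only [hv]
      linear_combination (u0 j + t) * h1
    have hvalv : ∑ j ∈ s.erase i, (a j * v j ^ 2 + b j * v j)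
        = (∑ j ∈ s.erase i, (lam * u0 j + (-(a j)) * u0 j ^ 2))
          + ((N:ℝ) - 1) * (lam * t) + (∑ j ∈ s.erase i, a j) * t ^ 2 := by
      rw [Finset.sum_congr rfl hpt2, Finset.sum_add_distrib, Finset.sum_add_distrib,
        Finset.sum_const, nsmul_eq_mul, hcardE, Finset.sum_mul]
    have hsumF : ∑ j ∈ s.erase i, (lam * u0 j + (-(a j)) * u0 j ^ 2)
        = F' - (lam * u0 i + (-(a i)) * u0 i ^ 2) := by
      have h2 : (lam * u0 i + (-(a i)) * u0 i ^ 2) + ∑ j ∈ s.erase i, (lam * u0 j + (-(a j)) * u0 j ^ 2)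
          = ∑ j ∈ s, (lam * u0 j + (-(a j)) * u0 j ^ 2) :=
        Finset.add_sum_erase s (fun j => lam * u0 j + (-(a j)) * u0 j ^ 2) hi
      have h3 : ∑ j ∈ s, (lam * u0 j + (-(a j)) * u0 j ^ 2) = F' := by
        rw [Finset.sum_add_distrib, ← Finset.mul_sum, hsum0, mul_zero, zero_add]
      linarith
    have hta : ((N:ℝ) - 1) * (lam * t) = lam * u0 i := by
      rw [ht]; field_simp
      try ring
    have hsuma : ((N:ℝ) - 1) * alo ≤ ∑ j ∈ s.erase i, a j := by
      have := Finset.card_nsmul_le_sum (s.erase i) a alo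
        (fun j hj => (ha j (hmem1 j (Finset.mem_of_mem_erase hj))).1)
      rw [nsmul_eq_mul, hcardE] at this
      exact this
    have htsq : (∑ j ∈ s.erase i, a j) * t ^ 2 ≥ (((N:ℝ) - 1) * alo) * t ^ 2 :=
      mul_le_mul_of_nonneg_right hsuma (sq_nonneg t)
    have htid : (((N:ℝ) - 1) * alo) * t ^ 2 = alo * u0 i ^ 2 / ((N:ℝ) - 1) := by
      rw [ht]; field_simp
      try ring
    have hmem : H N i ≥ ∑ j ∈ s.erase i, (a j * v j ^ 2 + b j * v j) :=
      (hHN i hi).2 ⟨v, hvsum, rfl⟩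
    rw [hvalv, hsumF, hta] at hmem
    rw [htid] at htsq
    linarith
  -- assemble P2
  set Q := ∑ j ∈ s, u0 j ^ 2 with hQ
  have hQF : (-ahi) * Q ≤ F' := by
    rw [hQ, Finset.mul_sum, hF']
    apply Finset.sum_le_sum
    intro j hj
    have : a j ≤ ahi := (ha j (hmem1 j hj)).2
    nlinarith [sq_nonneg (u0 j)]
  have hsa : ∑ i ∈ s, a i * u0 i ^ 2 = - F' := by
    rw [hF', ← Finset.sum_neg_distrib]
    exact Finset.sum_congr rfl (fun j _ => by ring)
  have hP2 : Ftot N * (((N:ℝ) - 1) - (alo/ahi)/((N:ℝ)-1)) ≤ ∑ i ∈ s, H N i := by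
    have h1 : ∑ i ∈ s, (F' + a i * u0 i ^ 2 + alo * u0 i ^ 2 / ((N:ℝ) - 1)) ≤ ∑ i ∈ s, H N i :=
      Finset.sum_le_sum hHlb
    have h2a : ∑ i ∈ s, alo * u0 i ^ 2 / ((N:ℝ) - 1) = (alo / ((N:ℝ) - 1)) * Q := by
      rw [hQ, Finset.mul_sum]
      exact Finset.sum_congr rfl (fun j _ => by ring)
    have h2 : ∑ i ∈ s, (F' + a i * u0 i ^ 2 + alo * u0 i ^ 2 / ((N:ℝ) - 1))
        = (N:ℝ) * F' - F' + (alo / ((N:ℝ) - 1)) * Q := by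
      rw [Finset.sum_add_distrib, Finset.sum_add_distrib, Finset.sum_const, hcard, nsmul_eq_mul,
        hsa, h2a]
      ring
    have hQle : Q ≤ F' / (-ahi) := by
      rw [le_div_iff₀ (by linarith : (0:ℝ) < -ahi)]
      linarith [hQF]
    have h3 : (alo / ((N:ℝ) - 1)) * (F' / (-ahi)) ≤ (alo / ((N:ℝ) - 1)) * Q := by
      apply mul_le_mul_of_nonpos_left hQle
      apply div_nonpos_of_nonpos_of_nonneg
      · linarith [lt_of_le_of_lt (le_trans (ha 1 le_rfl).1 (ha 1 le_rfl).2) hahi]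
      · linarith
    have h4 : (alo / ((N:ℝ) - 1)) * (F' / (-ahi)) = F' * (-((alo/ahi)/((N:ℝ)-1))) := by
      rw [div_neg]
      field_simp
    rw [hFeq]
    rw [h4] at h3
    nlinarith [h1, h2, h3]
  exact ⟨hP1, hP2⟩

/-- **Theorem 2, part 1.** For quadratic agents with uniformly bounded coefficients,
if `F_total(N)` is the optimal balanced social welfare over agents `1,…,N` and
`Hᵢ(N)` the optimal value with agent `i` excluded, and `F_total(N) > 0`, `Hᵢ(N) > 0`,
and the Market Power Balance condition hold for every `N`, then both endpoints
`(N−1)·F_total(N)/ΣᵢHᵢ(N)` and `F_total(N)/max_i Hᵢ(N)` of the scaling interval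
converge to `1`; hence any choice `c^N` in that interval converges to `1`. -/
theorem scaled_vcg_factor_tendsto_one
    (a b : ℕ → ℝ) (alo ahi blo bhi : ℝ)
    (ha : ∀ i, 1 ≤ i → alo ≤ a i ∧ a i ≤ ahi) (hahi : ahi < 0)
    (hb : ∀ i, 1 ≤ i → blo ≤ b i ∧ b i ≤ bhi) (hblo : 0 < blo)
    (Ftot : ℕ → ℝ) (H : ℕ → ℕ → ℝ) (Hmax : ℕ → ℝ)
    (hFtot : ∀ N : ℕ, 2 ≤ N → IsGreatest
      {v : ℝ | ∃ u : ℕ → ℝ, ∑ j ∈ Finset.Icc 1 N, u j = 0 ∧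
        v = ∑ j ∈ Finset.Icc 1 N, (a j * u j ^ 2 + b j * u j)} (Ftot N))
    (hH : ∀ N : ℕ, 2 ≤ N → ∀ i ∈ Finset.Icc 1 N, IsGreatest
      {v : ℝ | ∃ u : ℕ → ℝ, ∑ j ∈ (Finset.Icc 1 N).erase i, u j = 0 ∧
        v = ∑ j ∈ (Finset.Icc 1 N).erase i, (a j * u j ^ 2 + b j * u j)} (H N i))
    (hHmax : ∀ N : ℕ, 2 ≤ N → IsGreatest
      {v : ℝ | ∃ i ∈ Finset.Icc 1 N, v = H N i} (Hmax N))
    (hFpos : ∀ N : ℕ, 2 ≤ N → 0 < Ftot N)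
    (hHpos : ∀ N : ℕ, 2 ≤ N → ∀ i ∈ Finset.Icc 1 N, 0 < H N i)
    (hMPB : ∀ N : ℕ, 2 ≤ N → ((N : ℝ) - 1) * Hmax N ≤ ∑ i ∈ Finset.Icc 1 N, H N i) :
    Tendsto (fun N : ℕ => ((N : ℝ) - 1) * Ftot N / ∑ i ∈ Finset.Icc 1 N, H N i)
        atTop (nhds 1) ∧
      Tendsto (fun N : ℕ => Ftot N / Hmax N) atTop (nhds 1) ∧
      ∀ c : ℕ → ℝ,
        (∀ N : ℕ, 2 ≤ N →
          ((N : ℝ) - 1) * Ftot N / (∑ i ∈ Finset.Icc 1 N, H N i) ≤ c N ∧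
            c N ≤ Ftot N / Hmax N) →
        Tendsto c atTop (nhds 1) := by
  set D : ℕ → ℝ := fun N => ((N:ℝ) - 1) - (alo/ahi) / ((N:ℝ) - 1) with hD
  have hn1top : Tendsto (fun N : ℕ => (N:ℝ) - 1) atTop atTop := by
    have h := tendsto_atTop_add_const_right atTop (-1 : ℝ)
      (tendsto_natCast_atTop_atTop (R := ℝ))
    simpa [sub_eq_add_neg] using h
  have hDtop : Tendsto D atTop atTop := by
    have h1 : Tendsto (fun N : ℕ => -((alo/ahi) / ((N:ℝ) - 1))) atTop (nhds (-0)) :=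
      (Tendsto.div_atTop tendsto_const_nhds hn1top).neg
    have h2 := Filter.Tendsto.atTop_add hn1top h1
    simpa [hD, sub_eq_add_neg] using h2
  have hDpos : ∀ᶠ N : ℕ in atTop, 0 < D N := hDtop.eventually_gt_atTop 0
  have hU : Tendsto (fun N : ℕ => (N:ℝ) / D N) atTop (nhds 1) := by
    have h1 : Tendsto (fun N : ℕ => D N / (N:ℝ)) atTop (nhds 1) := by
      have heq : ∀ᶠ N : ℕ in atTop,
          (1 : ℝ) - 1/(N:ℝ) - (alo/ahi) * (1/(((N:ℝ) - 1) * (N:ℝ))) = D N / (N:ℝ) := by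
        filter_upwards [eventually_ge_atTop 2] with N hN
        have h2 : (2:ℝ) ≤ (N:ℝ) := by exact_mod_cast hN
        have hne : (N:ℝ) ≠ 0 := by linarith
        have hne1 : (N:ℝ) - 1 ≠ 0 := by linarith
        have hne2 : ahi ≠ 0 := ne_of_lt hahi
        rw [hD, eq_div_iff hne]
        field_simp
      have ha1 : Tendsto (fun N : ℕ => 1/(N:ℝ)) atTop (nhds 0) :=
        tendsto_one_div_atTop_nhds_zero_nat
      have ha2 : Tendsto (fun N : ℕ => ((N:ℝ) - 1) * (N:ℝ)) atTop atTop :=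
        hn1top.atTop_mul_atTop₀ (tendsto_natCast_atTop_atTop (R := ℝ))
      have ha3 : Tendsto (fun N : ℕ => 1/(((N:ℝ) - 1) * (N:ℝ))) atTop (nhds 0) :=
        Tendsto.div_atTop tendsto_const_nhds ha2
      have hlim : Tendsto (fun N : ℕ =>
          (1 : ℝ) - 1/(N:ℝ) - (alo/ahi) * (1/(((N:ℝ) - 1) * (N:ℝ)))) atTop (nhds 1) := by
        have hc1 : Tendsto (fun _ : ℕ => (1:ℝ)) atTop (nhds 1) := tendsto_const_nhds
        have hc2 : Tendsto (fun _ : ℕ => alo/ahi) atTop (nhds (alo/ahi)) := tendsto_const_nhds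
        have h := (hc1.sub ha1).sub (hc2.mul ha3)
        simpa using h
      exact hlim.congr' heq
    have h2 := h1.inv₀ (by norm_num)
    simp only [inv_div] at h2
    simpa using h2
  have key : ∀ N : ℕ, 2 ≤ N →
      (∑ i ∈ Finset.Icc 1 N, H N i ≤ ((N:ℝ) - 1) * Ftot N) ∧
      (Ftot N * D N ≤ ∑ i ∈ Finset.Icc 1 N, H N i) := fun N hN =>
    key_bounds a b alo ahi ha hahi Ftot H N hN (hFtot N hN) (hH N hN)
  have hSigpos : ∀ N : ℕ, 2 ≤ N → 0 < ∑ i ∈ Finset.Icc 1 N, H N i := by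
    intro N hN
    refine Finset.sum_pos (hHpos N hN) ⟨1, ?_⟩
    simp only [Finset.mem_Icc]
    omega
  have hHmaxpos : ∀ N : ℕ, 2 ≤ N → 0 < Hmax N := by
    intro N hN
    obtain ⟨i, hi, hv⟩ := (hHmax N hN).1
    rw [hv]
    exact hHpos N hN i hi
  have hHmaxub : ∀ N : ℕ, 2 ≤ N → ∑ i ∈ Finset.Icc 1 N, H N i ≤ (N:ℝ) * Hmax N := by
    intro N hN
    have h1 : ∑ i ∈ Finset.Icc 1 N, H N i ≤ ∑ _i ∈ Finset.Icc 1 N, Hmax N :=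
      Finset.sum_le_sum (fun i hi => (hHmax N hN).2 ⟨i, hi, rfl⟩)
    have h2 : ∑ _i ∈ Finset.Icc 1 N, Hmax N = (N:ℝ) * Hmax N := by
      rw [Finset.sum_const, Nat.card_Icc, nsmul_eq_mul]
      norm_num
    linarith
  have hx1 : ∀ N : ℕ, 2 ≤ N →
      1 ≤ ((N:ℝ) - 1) * Ftot N / ∑ i ∈ Finset.Icc 1 N, H N i := by
    intro N hN
    exact (one_le_div (hSigpos N hN)).2 (key N hN).1
  have hxy : ∀ N : ℕ, 2 ≤ N →
      ((N:ℝ) - 1) * Ftot N / (∑ i ∈ Finset.Icc 1 N, H N i) ≤ Ftot N / Hmax N := by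
    intro N hN
    rw [div_le_div_iff₀ (hSigpos N hN) (hHmaxpos N hN)]
    nlinarith [hFpos N hN, hMPB N hN]
  have hyU : ∀ N : ℕ, 2 ≤ N → 0 < D N → Ftot N / Hmax N ≤ (N:ℝ) / D N := by
    intro N hN hDN
    rw [div_le_div_iff₀ (hHmaxpos N hN) hDN]
    have h1 := (key N hN).2
    have h2 := hHmaxub N hN
    linarith
  have hev : ∀ᶠ N : ℕ in atTop, 2 ≤ N ∧ 0 < D N := (eventually_ge_atTop 2).and hDpos
  have hxlim : Tendsto (fun N : ℕ => ((N:ℝ) - 1) * Ftot N / ∑ i ∈ Finset.Icc 1 N, H N i)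
      atTop (nhds 1) := by
    apply tendsto_of_tendsto_of_tendsto_of_le_of_le' tendsto_const_nhds hU
    · filter_upwards [hev] with N hN using hx1 N hN.1
    · filter_upwards [hev] with N hN using le_trans (hxy N hN.1) (hyU N hN.1 hN.2)
  have hylim : Tendsto (fun N : ℕ => Ftot N / Hmax N) atTop (nhds 1) := by
    apply tendsto_of_tendsto_of_tendsto_of_le_of_le' tendsto_const_nhds hU
    · filter_upwards [hev] with N hN using le_trans (hx1 N hN.1) (hxy N hN.1)
    · filter_upwards [hev] with N hN using hyU N hN.1 hN.2
  refine ⟨hxlim, hylim, ?_⟩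
  intro c hc
  apply tendsto_of_tendsto_of_tendsto_of_le_of_le' tendsto_const_nhds hU
  · filter_upwards [hev] with N hN using le_trans (hx1 N hN.1) ((hc N hN.1).1)
  · filter_upwards [hev] with N hN using le_trans ((hc N hN.1).2) (hyU N hN.1 hN.2)
end

section
/- Let a : ℕ → ℝ and b : ℕ → ℝ be sequences with a̲ ≤ aᵢ ≤ ā < 0 and 0 < b̲ ≤ bᵢ ≤ b̄ for all i ≥ 1. For each N ≥ 2 put γ(N) := (Σ_{i=1}^N 1/aᵢ)⁻¹, λ*(N) := γ(N)·Σ_{i=1}^N bᵢ/aᵢ, and u₁*(N) := (λ*(N) − b₁)/(2a₁). Let U*(N) ∈ ℝ^N be the unique maximizer of Σ_{i=1}^N (aᵢuᵢ² + bᵢuᵢ) subject to Σ_{i=1}^N uᵢ = 0, let W*(N) ∈ ℝ^{N−1} (indexed by 2,…,N) be the unique maximizer of the problem over agents 2,…,N subject to Σ_{i=2}^N uᵢ = 0, and define the VCG payment of agent 1 by p₁(N) := Σ_{j=2}^N (aⱼ·W*(N)ⱼ² + bⱼ·W*(N)ⱼ) − Σ_{j=2}^N (aⱼ·U*(N)ⱼ²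 + bⱼ·U*(N)ⱼ). Then lim_{N→∞} (λ*(N)·u₁*(N) − p₁(N)) = 0. -/
open Finset Filter

private lemma quad_identity (s : Finset ℕ) (a b u v : ℕ → ℝ) (lam : ℝ)
    (hstat : ∀ i ∈ s, 2 * a i * u i + b i = lam) :
    ∑ i ∈ s, (a i * v i ^ 2 + b i * v i)
      = (∑ i ∈ s, (a i * u i ^ 2 + b i * u i))
        + (∑ i ∈ s, a i * (v i - u i) ^ 2)
        + lam * ((∑ i ∈ s, v i) - ∑ i ∈ s, u i) := by
  rw [← Finset.sum_add_distrib, mul_sub, Finset.mul_sum, Finset.mul_sum,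
    ← Finset.sum_sub_distrib, ← Finset.sum_add_distrib]
  refine Finset.sum_congr rfl fun i hi => ?_
  have h := hstat i hi
  rw [← h]; ring

private lemma opt_eq (s : Finset ℕ) (a b u U : ℕ → ℝ) (lam ahi : ℝ) (hahi : ahi < 0)
    (ha : ∀ i ∈ s, a i ≤ ahi)
    (hstat : ∀ i ∈ s, 2 * a i * u i + b i = lam)
    (hufeas : ∑ i ∈ s, u i = 0) (hUfeas : ∑ i ∈ s, U i = 0)
    (hopt : ∑ i ∈ s, (a i * u i ^ 2 + b i * u i) ≤
      ∑ i ∈ s, (a i * U i ^ 2 + b i * U i)) :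
    ∀ i ∈ s, U i = u i := by
  have hid := quad_identity s a b u U lam hstat
  rw [hufeas, hUfeas] at hid
  simp only [sub_zero, mul_zero, add_zero] at hid
  have hsum : 0 ≤ ∑ i ∈ s, a i * (U i - u i) ^ 2 := by linarith
  have hzero : ∀ i ∈ s, a i * (U i - u i) ^ 2 = 0 := by
    have hnonpos : ∀ i ∈ s, a i * (U i - u i) ^ 2 ≤ 0 := fun i hi =>
      mul_nonpos_of_nonpos_of_nonneg (le_trans (ha i hi) hahi.le) (sq_nonneg _)
    intro i hi
    by_contra hne
    have hlt : a i * (U i - u i) ^ 2 < 0 := lt_of_le_of_ne (hnonpos i hi) hne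
    have : ∑ j ∈ s, a j * (U j - u j) ^ 2 < 0 :=
      Finset.sum_neg' hnonpos ⟨i, hi, hlt⟩
    linarith
  intro i hi
  have h := hzero i hi
  have hai : a i < 0 := lt_of_le_of_lt (ha i hi) hahi
  have hsq : (U i - u i) ^ 2 = 0 := by
    rcases mul_eq_zero.1 h with h' | h'
    · exact absurd h' hai.ne
    · exact h'
  have := pow_eq_zero_iff (n := 2) (by norm_num) |>.1 hsq
  linarith

private lemma le_of_mul_le_mul_neg {x y A : ℝ} (hA : A < 0) (h : x * A ≤ y * A) : y ≤ x := by
  nlinarith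

private lemma nonneg_of_mul_nonpos_neg {x A : ℝ} (hA : A < 0) (h : x * A ≤ 0) : 0 ≤ x := by
  nlinarith

private lemma sum_mem_bounds (s : Finset ℕ) (f : ℕ → ℝ) (lo hi : ℝ)
    (h : ∀ i ∈ s, lo ≤ f i ∧ f i ≤ hi) :
    (s.card : ℝ) * lo ≤ ∑ i ∈ s, f i ∧ ∑ i ∈ s, f i ≤ (s.card : ℝ) * hi :=
  ⟨by simpa [nsmul_eq_mul] using Finset.card_nsmul_le_sum s f lo (fun i hi => (h i hi).1),
   by simpa [nsmul_eq_mul] using Finset.sum_le_card_nsmul s f hi (fun i hi => (h i hi).2)⟩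

set_option maxHeartbeats 1000000 in
/-- **Theorem 2, part 2.** For quadratic agents with uniformly bounded coefficients,
the VCG payment `p₁(N)` of agent `1` converges to its Lagrange payment
`λ*(N)·u₁*(N)` as the number of agents grows. -/
theorem vcg_payment_tendsto_lagrange_payment
    (a b : ℕ → ℝ) (alo ahi blo bhi : ℝ)
    (ha : ∀ i, 1 ≤ i → alo ≤ a i ∧ a i ≤ ahi) (hahi : ahi < 0)
    (hb : ∀ i, 1 ≤ i → blo ≤ b i ∧ b i ≤ bhi) (hblo : 0 < blo)
    (γ lam u1 : ℕ → ℝ)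
    (hγ : ∀ N : ℕ, γ N = (∑ i ∈ Finset.Icc 1 N, 1 / a i)⁻¹)
    (hlam : ∀ N : ℕ, lam N = γ N * ∑ i ∈ Finset.Icc 1 N, b i / a i)
    (hu1 : ∀ N : ℕ, u1 N = (lam N - b 1) / (2 * a 1))
    (U W : ℕ → ℕ → ℝ)
    (hUfeas : ∀ N : ℕ, 2 ≤ N → ∑ j ∈ Finset.Icc 1 N, U N j = 0)
    (hUopt : ∀ N : ℕ, 2 ≤ N → ∀ v : ℕ → ℝ, ∑ j ∈ Finset.Icc 1 N, v j = 0 →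
      ∑ j ∈ Finset.Icc 1 N, (a j * v j ^ 2 + b j * v j) ≤
        ∑ j ∈ Finset.Icc 1 N, (a j * U N j ^ 2 + b j * U N j))
    (hWfeas : ∀ N : ℕ, 2 ≤ N → ∑ j ∈ Finset.Icc 2 N, W N j = 0)
    (hWopt : ∀ N : ℕ, 2 ≤ N → ∀ v : ℕ → ℝ, ∑ j ∈ Finset.Icc 2 N, v j = 0 →
      ∑ j ∈ Finset.Icc 2 N, (a j * v j ^ 2 + b j * v j) ≤
        ∑ j ∈ Finset.Icc 2 N, (a j * W N j ^ 2 + b j * W N j))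
    (p1 : ℕ → ℝ)
    (hp1 : ∀ N : ℕ, p1 N =
      (∑ j ∈ Finset.Icc 2 N, (a j * W N j ^ 2 + b j * W N j)) -
        ∑ j ∈ Finset.Icc 2 N, (a j * U N j ^ 2 + b j * U N j)) :
    Tendsto (fun N : ℕ => lam N * u1 N - p1 N) atTop (nhds 0) := by
  have ha1 := ha 1 le_rfl
  have hb1 := hb 1 le_rfl
  have ha1neg : a 1 < 0 := lt_of_le_of_lt ha1.2 hahi
  have halo : alo < 0 := lt_of_le_of_lt (ha1.1.trans ha1.2) hahi
  have hbhi : 0 < bhi := lt_of_lt_of_le hblo (hb1.1.trans hb1.2)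
  set L : ℝ := bhi * alo / ahi with hLdef
  have hL : 0 ≤ L := le_of_lt (div_pos_of_neg_of_neg (mul_neg_of_pos_of_neg hbhi halo) hahi)
  set C2 : ℝ := (L + bhi) / (2 * (-ahi)) with hC2def
  have hC2 : 0 ≤ C2 := div_nonneg (by linarith) (by linarith)
  set K : ℝ := bhi * alo ^ 2 / ahi ^ 2 with hKdef
  have hK : 0 ≤ K := div_nonneg (mul_nonneg hbhi.le (sq_nonneg alo)) (sq_nonneg ahi)
  set D : ℝ := 1 / (-ahi) with hDdef
  have hD : 0 < D := div_pos one_pos (by linarith)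
  set Ctot : ℝ := K * C2 + K ^ 2 * D / 4 with hCtotdef
  have hbound : ∀ N : ℕ, 2 ≤ N → |lam N * u1 N - p1 N| ≤ Ctot / N := by
    intro N hN
    have hN1 : 1 ≤ N := by omega
    have hn2 : (2 : ℝ) ≤ (N : ℝ) := by exact_mod_cast hN
    have hnpos : (0 : ℝ) < (N : ℝ) := by linarith
    have hn1pos : (0 : ℝ) < (N : ℝ) - 1 := by linarith
    have hmem1 : ∀ i ∈ Finset.Icc 1 N, 1 ≤ i := fun i hi => (Finset.mem_Icc.1 hi).1
    have hmem2 : ∀ i ∈ Finset.Icc 2 N, 1 ≤ i := fun i hi =>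
      le_trans (by norm_num) (Finset.mem_Icc.1 hi).1
    have haneg : ∀ i, 1 ≤ i → a i < 0 := fun i hi => lt_of_le_of_lt (ha i hi).2 hahi
    have hane : ∀ i, 1 ≤ i → a i ≠ 0 := fun i hi => (haneg i hi).ne
    set A : ℝ := ∑ i ∈ Finset.Icc 1 N, 1 / a i with hAdef
    set B : ℝ := ∑ i ∈ Finset.Icc 1 N, b i / a i with hBdef
    set A' : ℝ := ∑ i ∈ Finset.Icc 2 N, 1 / a i with hA'def
    set B' : ℝ := ∑ i ∈ Finset.Icc 2 N, b i / a i with hB'def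
    have hcard1 : ((Finset.Icc 1 N).card : ℝ) = (N : ℝ) := by
      rw [Nat.card_Icc]; simp
    have hcard2 : ((Finset.Icc 2 N).card : ℝ) = (N : ℝ) - 1 := by
      rw [Nat.card_Icc]
      have : N + 1 - 2 = N - 1 := by omega
      rw [this, Nat.cast_sub hN1]; simp
    have hinva : ∀ i, 1 ≤ i → 1 / ahi ≤ 1 / a i ∧ 1 / a i ≤ 1 / alo := fun i hi =>
      ⟨one_div_le_one_div_of_neg_of_le hahi (ha i hi).2,
       one_div_le_one_div_of_neg_of_le (haneg i hi) (ha i hi).1⟩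
    have hba : ∀ i, 1 ≤ i → bhi / ahi ≤ b i / a i ∧ b i / a i ≤ 0 := by
      intro i hi
      have hai := haneg i hi
      have hbi := hb i hi
      have hbipos : 0 < b i := lt_of_lt_of_le hblo hbi.1
      have hinv := hinva i hi
      have hinvahineg : 1 / ahi < 0 := div_neg_of_pos_of_neg one_pos hahi
      constructor
      · calc bhi / ahi = bhi * (1 / ahi) := by ring
          _ ≤ b i * (1 / ahi) := mul_le_mul_of_nonpos_right hbi.2 hinvahineg.le
          _ ≤ b i * (1 / a i) := mul_le_mul_of_nonneg_left hinv.1 hbipos.le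
          _ = b i / a i := by ring
      · exact div_nonpos_of_nonneg_of_nonpos hbipos.le hai.le
    -- sum bounds
    have hAb := sum_mem_bounds (Finset.Icc 1 N) (fun i => 1 / a i) (1 / ahi) (1 / alo)
      (fun i hi => hinva i (hmem1 i hi))
    have hA'b := sum_mem_bounds (Finset.Icc 2 N) (fun i => 1 / a i) (1 / ahi) (1 / alo)
      (fun i hi => hinva i (hmem2 i hi))
    have hBb := sum_mem_bounds (Finset.Icc 1 N) (fun i => b i / a i) (bhi / ahi) 0
      (fun i hi => hba i (hmem1 i hi))
    have hB'b := sum_mem_bounds (Finset.Icc 2 N) (fun i => b i / a i) (bhi / ahi) 0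
      (fun i hi => hba i (hmem2 i hi))
    rw [hcard1] at hAb hBb
    rw [hcard2] at hA'b hB'b
    rw [← hAdef] at hAb
    rw [← hBdef] at hBb
    rw [← hA'def] at hA'b
    rw [← hB'def] at hB'b
    simp only [mul_zero] at hBb hB'b
    have hinvaloneg : 1 / alo < 0 := div_neg_of_pos_of_neg one_pos halo
    have hAneg : A < 0 := lt_of_le_of_lt hAb.2 (mul_neg_of_pos_of_neg hnpos hinvaloneg)
    have hA'neg : A' < 0 := lt_of_le_of_lt hA'b.2 (mul_neg_of_pos_of_neg hn1pos hinvaloneg)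
    -- lam and mu equations
    have hlamA : lam N * A = B := by
      rw [hlam N, hγ N, ← hAdef, ← hBdef, mul_comm, ← mul_assoc,
        mul_inv_cancel₀ hAneg.ne, one_mul]
    set mu : ℝ := B' / A' with hmudef
    have hmuA' : mu * A' = B' := div_mul_cancel₀ B' hA'neg.ne
    -- explicit optimizers
    set ustar : ℕ → ℝ := fun j => (lam N - b j) / (2 * a j) with hustardef
    set wstar : ℕ → ℝ := fun j => (mu - b j) / (2 * a j) with hwstardef
    have hustat : ∀ i ∈ Finset.Icc 1 N, 2 * a i * ustar i + b i = lam N := by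
      intro i hi
      have h0 := hane i (hmem1 i hi)
      simp only [hustardef]
      field_simp
      ring
    have hwstat : ∀ i ∈ Finset.Icc 2 N, 2 * a i * wstar i + b i = mu := by
      intro i hi
      have h0 := hane i (hmem2 i hi)
      simp only [hwstardef]
      field_simp
      ring
    have hufeas : ∑ i ∈ Finset.Icc 1 N, ustar i = 0 := by
      have hterm : ∀ i ∈ Finset.Icc 1 N,
          ustar i = (lam N * (1 / a i) - b i / a i) / 2 := by
        intro i hi
        have h0 := hane i (hmem1 i hi)
        simp only [hustardef]
        rw [mul_one_div, ← sub_div, div_div, mul_comm]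
      rw [Finset.sum_congr rfl hterm, ← Finset.sum_div, Finset.sum_sub_distrib,
        ← Finset.mul_sum, ← hAdef, ← hBdef, hlamA, sub_self, zero_div]
    have hwfeas : ∑ i ∈ Finset.Icc 2 N, wstar i = 0 := by
      have hterm : ∀ i ∈ Finset.Icc 2 N,
          wstar i = (mu * (1 / a i) - b i / a i) / 2 := by
        intro i hi
        have h0 := hane i (hmem2 i hi)
        simp only [hwstardef]
        rw [mul_one_div, ← sub_div, div_div, mul_comm]
      rw [Finset.sum_congr rfl hterm, ← Finset.sum_div, Finset.sum_sub_distrib,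
        ← Finset.mul_sum, ← hA'def, ← hB'def, hmuA', sub_self, zero_div]
    -- identification of U and W
    have hUeq : ∀ i ∈ Finset.Icc 1 N, U N i = ustar i :=
      opt_eq _ a b ustar (U N) (lam N) ahi hahi (fun i hi => (ha i (hmem1 i hi)).2)
        hustat hufeas (hUfeas N hN) (hUopt N hN ustar hufeas)
    have hWeq : ∀ i ∈ Finset.Icc 2 N, W N i = wstar i :=
      opt_eq _ a b wstar (W N) mu ahi hahi (fun i hi => (ha i (hmem2 i hi)).2)
        hwstat hwfeas (hWfeas N hN) (hWopt N hN wstar hwfeas)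
    have hUeq2 : ∀ i ∈ Finset.Icc 2 N, U N i = ustar i := fun i hi =>
      hUeq i (Finset.Icc_subset_Icc_left (by norm_num) hi)
    -- split of Icc 1 N
    have h1notin : (1 : ℕ) ∉ Finset.Icc 2 N := by simp
    have hsplit : Finset.Icc 1 N = insert 1 (Finset.Icc 2 N) := by
      ext i
      simp only [Finset.mem_Icc, Finset.mem_insert]
      omega
    have hsum2u : ∑ i ∈ Finset.Icc 2 N, ustar i = -(u1 N) := by
      have h := hufeas
      rw [hsplit, Finset.sum_insert h1notin] at h
      have hu1e : ustar 1 = u1 N := by rw [hu1 N, hustardef]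
      linarith [h, hu1e.symm ▸ h]
    -- closed form for p1
    have hAsplit : A = 1 / a 1 + A' := by
      rw [hAdef, hA'def, hsplit, Finset.sum_insert h1notin]
    have hBsplit : B = b 1 / a 1 + B' := by
      rw [hBdef, hB'def, hsplit, Finset.sum_insert h1notin]
    have hqsum : ∑ i ∈ Finset.Icc 2 N, a i * (ustar i - wstar i) ^ 2
        = (lam N - mu) ^ 2 / 4 * A' := by
      have hterm : ∀ i ∈ Finset.Icc 2 N,
          a i * (ustar i - wstar i) ^ 2 = (lam N - mu) ^ 2 / 4 * (1 / a i) := by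
        intro i hi
        have h0 := hane i (hmem2 i hi)
        simp only [hustardef, hwstardef]
        field_simp
        ring
      rw [Finset.sum_congr rfl hterm, ← Finset.mul_sum, ← hA'def]
    have hid2 := quad_identity (Finset.Icc 2 N) a b wstar ustar mu hwstat
    rw [hqsum, hsum2u, hwfeas, sub_zero] at hid2
    have hWsum : ∑ j ∈ Finset.Icc 2 N, (a j * W N j ^ 2 + b j * W N j)
        = ∑ j ∈ Finset.Icc 2 N, (a j * wstar j ^ 2 + b j * wstar j) :=
      Finset.sum_congr rfl (fun i hi => by rw [hWeq i hi])
    have hUsum : ∑ j ∈ Finset.Icc 2 N, (a j * U N j ^ 2 + b j * U N j)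
        = ∑ j ∈ Finset.Icc 2 N, (a j * ustar j ^ 2 + b j * ustar j) :=
      Finset.sum_congr rfl (fun i hi => by rw [hUeq2 i hi])
    have hp1' : p1 N = -((lam N - mu) ^ 2 / 4 * A') + mu * u1 N := by
      rw [hp1 N, hWsum, hUsum]
      linarith [hid2]
    have hform : lam N * u1 N - p1 N
        = (lam N - mu) * u1 N + (lam N - mu) ^ 2 * A' / 4 := by
      rw [hp1']; ring
    -- quantitative bounds
    set d : ℝ := lam N - mu with hddef
    have hahine : ahi ≠ 0 := hahi.ne
    have halone : alo ≠ 0 := halo.ne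
    have ha1ne : a 1 ≠ 0 := ha1neg.ne
    have hnne : (N : ℝ) ≠ 0 := hnpos.ne'
    have hdprod : d * (a 1 * A * A') = b 1 * A' - B' := by
      have step1 : d * (a 1 * A * A')
          = (lam N * A) * (a 1 * A') - (mu * A') * (a 1 * A) := by ring
      rw [step1, hlamA, hmuA', hBsplit, hAsplit]
      field_simp
      ring
    -- numerator bound
    have hnum : |b 1 * A' - B'| ≤ ((N : ℝ) - 1) * bhi / (-ahi) := by
      rw [abs_le]
      have hb1A'lo : bhi * A' ≤ b 1 * A' := mul_le_mul_of_nonpos_right hb1.2 hA'neg.le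
      have hb1A'hi : b 1 * A' ≤ 0 :=
        mul_nonpos_of_nonneg_of_nonpos (le_of_lt (lt_of_lt_of_le hblo hb1.1)) hA'neg.le
      have h2 : bhi * (((N : ℝ) - 1) * (1 / ahi)) ≤ bhi * A' :=
        mul_le_mul_of_nonneg_left hA'b.1 hbhi.le
      have he1 : -(((N : ℝ) - 1) * bhi / (-ahi)) = bhi * (((N : ℝ) - 1) * (1 / ahi)) := by
        rw [div_neg]; ring
      have he2 : ((N : ℝ) - 1) * bhi / (-ahi) = -(((N : ℝ) - 1) * (bhi / ahi)) := by
        rw [div_neg]; ring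
      constructor
      · linarith only [he1, h2, hb1A'lo, hB'b.2]
      · linarith only [he2, hb1A'hi, hB'b.1]
    -- denominator bound
    have hAlb : A ≤ (N : ℝ) * (1 / alo) := hAb.2
    have hA'lb : A' ≤ ((N : ℝ) - 1) * (1 / alo) := hA'b.2
    have hX0 : (N : ℝ) * (1 / alo) ≤ 0 := (mul_neg_of_pos_of_neg hnpos hinvaloneg).le
    have hAA' : ((N : ℝ) * (1 / alo)) * (((N : ℝ) - 1) * (1 / alo)) ≤ A * A' := by
      have s1 : ((N : ℝ) * (1 / alo)) * A' ≤ A * A' :=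
        mul_le_mul_of_nonpos_right hAlb hA'neg.le
      have s2 : ((N : ℝ) * (1 / alo)) * (((N : ℝ) - 1) * (1 / alo))
          ≤ ((N : ℝ) * (1 / alo)) * A' :=
        mul_le_mul_of_nonpos_left hA'lb hX0
      linarith only [s1, s2]
    set denlb : ℝ := (-ahi) * ((N : ℝ) * ((N : ℝ) - 1) / alo ^ 2) with hdenlbdef
    have halo2 : (0 : ℝ) < alo ^ 2 := pow_two_pos_of_ne_zero halone
    have hdenlbpos : 0 < denlb := by
      have hfrac : (0:ℝ) < (N : ℝ) * ((N : ℝ) - 1) / alo ^ 2 :=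
        div_pos (mul_pos hnpos hn1pos) halo2
      exact mul_pos (by linarith only [hahi]) hfrac
    have hden : denlb ≤ |a 1 * A * A'| := by
      have hAA'pos : 0 < A * A' := mul_pos_of_neg_of_neg hAneg hA'neg
      have hprodneg : a 1 * A * A' < 0 := by
        rw [mul_assoc]
        exact mul_neg_of_neg_of_pos ha1neg hAA'pos
      rw [abs_of_neg hprodneg]
      have hXnn : (0:ℝ) ≤ ((N : ℝ) * (1 / alo)) * (((N : ℝ) - 1) * (1 / alo)) :=
        (mul_pos_of_neg_of_neg (mul_neg_of_pos_of_neg hnpos hinvaloneg)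
          (mul_neg_of_pos_of_neg hn1pos hinvaloneg)).le
      have h1 : (-a 1) * (((N : ℝ) * (1 / alo)) * (((N : ℝ) - 1) * (1 / alo)))
          ≤ (-a 1) * (A * A') :=
        mul_le_mul_of_nonneg_left hAA' (by linarith only [ha1neg])
      have h2 : (-ahi) * (((N : ℝ) * (1 / alo)) * (((N : ℝ) - 1) * (1 / alo)))
          ≤ (-a 1) * (((N : ℝ) * (1 / alo)) * (((N : ℝ) - 1) * (1 / alo))) :=
        mul_le_mul_of_nonneg_right (by linarith only [ha1.2]) hXnn
      have he : denlb = (-ahi) * (((N : ℝ) * (1 / alo)) * (((N : ℝ) - 1) * (1 / alo))) := by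
        rw [hdenlbdef]; field_simp
      have he3 : -(a 1 * A * A') = (-a 1) * (A * A') := by ring
      linarith only [h1, h2, he, he3]
    -- bound on d
    have hdbound : |d| ≤ K / (N : ℝ) := by
      have habs : |d| * |a 1 * A * A'| = |b 1 * A' - B'| := by
        rw [← abs_mul, hdprod]
      have h1 : |d| * denlb ≤ ((N : ℝ) - 1) * bhi / (-ahi) := by
        calc |d| * denlb ≤ |d| * |a 1 * A * A'| :=
              mul_le_mul_of_nonneg_left hden (abs_nonneg _)
          _ = |b 1 * A' - B'| := habs
          _ ≤ ((N : ℝ) - 1) * bhi / (-ahi) := hnum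
      have h2 : |d| ≤ (((N : ℝ) - 1) * bhi / (-ahi)) / denlb :=
        (le_div_iff₀ hdenlbpos).2 h1
      have h3 : (((N : ℝ) - 1) * bhi / (-ahi)) / denlb = K / (N : ℝ) := by
        rw [hdenlbdef, hKdef]
        field_simp
      rw [h3] at h2
      exact h2
    -- bound on u1
    have hlamnonneg : 0 ≤ lam N := by
      refine nonneg_of_mul_nonpos_neg hAneg ?_
      rw [hlamA]
      exact hBb.2
    have hlamub : lam N ≤ L := by
      refine le_of_mul_le_mul_neg hAneg ?_
      have hs1 : L * A ≤ L * ((N : ℝ) * (1 / alo)) := mul_le_mul_of_nonneg_left hAlb hL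
      have he : L * ((N : ℝ) * (1 / alo)) = (N : ℝ) * (bhi / ahi) := by
        rw [hLdef]; field_simp
      have := hBb.1
      rw [← hlamA] at this
      linarith only [hs1, he, this]
    have hu1bound : |u1 N| ≤ C2 := by
      rw [hu1 N, abs_div]
      have hb1pos : 0 < b 1 := lt_of_lt_of_le hblo hb1.1
      have hnum2 : |lam N - b 1| ≤ L + bhi := by
        rw [abs_le]
        constructor
        · linarith only [hlamnonneg, hb1.2, hL]
        · linarith only [hlamub, hb1pos, hbhi]
      have hden2 : 2 * (-ahi) ≤ |2 * a 1| := by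
        rw [abs_of_neg (by linarith only [ha1neg] : 2 * a 1 < 0)]
        linarith only [ha1.2]
      rw [hC2def]
      exact div_le_div₀ (by linarith only [hL, hbhi]) hnum2 (by linarith only [hahi]) hden2
    -- bound on A'
    have hA'bound : |A'| ≤ (N : ℝ) * D := by
      rw [abs_of_neg hA'neg, hDdef]
      have h1 : ((N : ℝ) - 1) * (1 / ahi) ≤ A' := hA'b.1
      have he : ((N : ℝ) - 1) * (1 / (-ahi)) = -(((N : ℝ) - 1) * (1 / ahi)) := by
        rw [div_neg]; ring
      have hpos : (0:ℝ) < 1 / (-ahi) := div_pos one_pos (by linarith only [hahi])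
      have h3 : ((N : ℝ) - 1) * (1 / (-ahi)) ≤ (N : ℝ) * (1 / (-ahi)) :=
        mul_le_mul_of_nonneg_right (by linarith only []) hpos.le
      linarith only [h1, he, h3]
    -- combine
    rw [hform]
    have h1 : |d * u1 N| ≤ (K / (N : ℝ)) * C2 := by
      rw [abs_mul]
      exact mul_le_mul hdbound hu1bound (abs_nonneg _)
        (div_nonneg hK hnpos.le)
    have h2 : |d ^ 2 * A' / 4| ≤ (K / (N : ℝ)) ^ 2 * ((N : ℝ) * D) / 4 := by
      rw [abs_div, abs_mul, abs_pow]
      have hx : |d| ^ 2 ≤ (K / (N : ℝ)) ^ 2 :=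
        pow_le_pow_left₀ (abs_nonneg _) hdbound 2
      have hmm : |d| ^ 2 * |A'| ≤ (K / (N : ℝ)) ^ 2 * ((N : ℝ) * D) :=
        mul_le_mul hx hA'bound (abs_nonneg _) (by positivity)
      have h4 : |(4:ℝ)| = 4 := by norm_num
      rw [h4]
      linarith only [hmm]
    have htri : |d * u1 N + d ^ 2 * A' / 4| ≤ |d * u1 N| + |d ^ 2 * A' / 4| :=
      abs_add_le _ _
    have hfinal : (K / (N : ℝ)) * C2 + (K / (N : ℝ)) ^ 2 * ((N : ℝ) * D) / 4
        = Ctot / (N : ℝ) := by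
      rw [hCtotdef]
      field_simp
    linarith only [htri, h1, h2, hfinal]
  have hnorm : ∀ᶠ N in atTop, ‖lam N * u1 N - p1 N‖ ≤ Ctot / (N : ℝ) := by
    filter_upwards [eventually_ge_atTop 2] with N hN
    rw [Real.norm_eq_abs]
    exact hbound N hN
  exact squeeze_zero_norm' hnorm (tendsto_const_div_atTop_nhds_zero_nat Ctot)
end

section
/- Consider N agents and horizon T ≥ 1. A bid for agent j is a triple (F̂_j, ĝ_j, x̂_{j,0}) with F̂_j : ℝ×ℝ → ℝ, ĝ_j : ℝ×ℝ → ℝ, x̂_{j,0} ∈ ℝ. Given a profile of bids, call (x, u) with x : {1,…,N}×{0,…,T} → ℝ, u : {1,…,N}×{0,…,T−1} → ℝ feasible for that profile if x_j(t+1) = ĝ_j(x_j(t), u_j(t)) and x_j(0) = x̂_{j,0} for all j and t, and Σ_{j=1}^N u_j(t) = 0 for all t. Fix an agent i with true data (F_i, g_i, x_{i,0}), and define its realized utility of a pair of sequences (x_i(·), u_i(·)) as the extended real Σ_{t=0}^{T−1} F_i(x_i(t), u_i(t)) if x_i(t+1) = g_i(x_i(t), u_i(t)) for all t and x_i(0)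 = x_{i,0}, and −∞ otherwise. Fix bids (F̂_j, ĝ_j, x̂_{j,0}) of all agents j ≠ i, an arbitrary constant h ∈ ℝ, and an arbitrary bid (F̂_i, ĝ_i, x̂_{i,0}) of agent i. Suppose (x̄, ū) maximizes Σ_{j=1}^N Σ_{t=0}^{T−1} [bid utility of j] over all pairs feasible for the profile in which agent i bids truthfully (F_i, g_i, x_{i,0}), and (x̂, û) maximizes the corresponding sum over all pairs feasible for the profile in which agent i bids (F̂_i, ĝ_i, x̂_{i,0}). Define the Groves payment of agent i under an assignment (x, u) as p_i(x, u) := h − Σ_{j≠i} Σ_{t=0}^{T−1} F̂_j(x_j(t), u_j(t)). Then, as extended reals, [realized utility of (x̄_i, ū_i)] − p_i(x̄, ū) ≥ [realized utility of (x̂_i, û_i)] − p_i(x̂, û). -/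
open Finset
open scoped Classical

/-- A pair of state/control trajectories `(x, u)` is feasible for the bid profile
with dynamics `g` and initial conditions `x0`: each agent's bid dynamics and initial
condition hold, and generation/consumption is balanced at every period `t < T`. -/
def DynFeasible (N T : ℕ) (g : Fin N → ℝ → ℝ → ℝ) (x0 : Fin N → ℝ)
    (x u : Fin N → ℕ → ℝ) : Prop :=
  (∀ j, ∀ t < T, x j (t + 1) = g j (x j t) (u j t)) ∧
    (∀ j, x j 0 = x0 j) ∧
    (∀ t < T, ∑ j, u j t = 0)

/-- The total bid welfare of an assignment `(x, u)` under bid utilities `F`. -/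
def DynBidWelfare (N T : ℕ) (F : Fin N → ℝ → ℝ → ℝ) (x u : Fin N → ℕ → ℝ) : ℝ :=
  ∑ j, ∑ t ∈ Finset.range T, F j (x j t) (u j t)

/-- **Theorem 3.** Truth-telling of utility function, state dynamics, and initial
condition is a dominant strategy under the Groves mechanism for a deterministic
dynamic system: the realized net utility (an extended real, `−∞` when the assignment
violates the agent's true dynamics or initial condition) of agent `i` under the
assignment computed from its truthful bid is at least the one computed from any
other bid, whatever the bids of the others. -/
theorem groves_dynamic_truthtelling
    (N T : ℕ) (hT : 1 ≤ T) (i : Fin N)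
    -- bid profile in which agent `i` bids `(F̂ᵢ, ĝᵢ, x̂ᵢ₀)`, arbitrary
    (Fhat ghat : Fin N → ℝ → ℝ → ℝ) (xhat0 : Fin N → ℝ)
    -- true data of agent `i`
    (Fi gi : ℝ → ℝ → ℝ) (xi0 : ℝ)
    -- Groves constant
    (h : ℝ)
    -- realized utility of agent `i` for a pair of sequences, as an extended real
    (RU : (ℕ → ℝ) → (ℕ → ℝ) → EReal)
    (hRU : ∀ xi ui : ℕ → ℝ,
      RU xi ui =
        if (∀ t < T, xi (t + 1) = gi (xi t) (ui t)) ∧ xi 0 = xi0 then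
          (((∑ t ∈ Finset.range T, Fi (xi t) (ui t)) : ℝ) : EReal)
        else ⊥)
    -- Groves payment of agent `i` under an assignment `(x, u)`
    (pay : (Fin N → ℕ → ℝ) → (Fin N → ℕ → ℝ) → ℝ)
    (hpay : ∀ x u, pay x u =
      h - ∑ j ∈ Finset.univ.erase i, ∑ t ∈ Finset.range T, Fhat j (x j t) (u j t))
    -- `(x̄, ū)` maximizes bid welfare for the profile where agent `i` bids truthfully
    (xb ub : Fin N → ℕ → ℝ)
    (hxbFeas : DynFeasible N T (Function.update ghat i gi)
      (Function.update xhat0 i xi0) xb ub)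
    (hxbOpt : ∀ x u, DynFeasible N T (Function.update ghat i gi)
        (Function.update xhat0 i xi0) x u →
      DynBidWelfare N T (Function.update Fhat i Fi) x u ≤
        DynBidWelfare N T (Function.update Fhat i Fi) xb ub)
    -- `(x̂, û)` maximizes bid welfare for the profile where agent `i` bids `(F̂ᵢ, ĝᵢ, x̂ᵢ₀)`
    (xh uh : Fin N → ℕ → ℝ)
    (hxhFeas : DynFeasible N T ghat xhat0 xh uh)
    (hxhOpt : ∀ x u, DynFeasible N T ghat xhat0 x u →
      DynBidWelfare N T Fhat x u ≤ DynBidWelfare N T Fhat xh uh) :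
    RU (xh i) (uh i) - ((pay xh uh : ℝ) : EReal) ≤
      RU (xb i) (ub i) - ((pay xb ub : ℝ) : EReal) := by

  have hwelfare : ∀ x u : Fin N → ℕ → ℝ,
      DynBidWelfare N T (Function.update Fhat i Fi) x u =
        (∑ t ∈ Finset.range T, Fi (x i t) (u i t)) +
          ∑ j ∈ Finset.univ.erase i, ∑ t ∈ Finset.range T, Fhat j (x j t) (u j t) := by
    intro x u
    rw [DynBidWelfare, ← Finset.add_sum_erase _ _ (Finset.mem_univ i),
      Function.update_self]
    congr 1
    refine Finset.sum_congr rfl fun j hj => ?_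
    rw [Function.update_of_ne (Finset.ne_of_mem_erase hj)]
  -- truthful assignment satisfies true dynamics and initial condition
  have hxbDyn : (∀ t < T, xb i (t + 1) = gi (xb i t) (ub i t)) ∧ xb i 0 = xi0 := by
    refine ⟨fun t ht => ?_, ?_⟩
    · have := hxbFeas.1 i t ht; rwa [Function.update_self] at this
    · have := hxbFeas.2.1 i; rwa [Function.update_self] at this
  rw [hRU, hRU, if_pos hxbDyn]
  by_cases hcase : (∀ t < T, xh i (t + 1) = gi (xh i t) (uh i t)) ∧ xh i 0 = xi0
  · rw [if_pos hcase]
    rw [← EReal.coe_sub, ← EReal.coe_sub, EReal.coe_le_coe_iff]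
    -- (xh, uh) is feasible for truthful profile
    have hfeas : DynFeasible N T (Function.update ghat i gi)
        (Function.update xhat0 i xi0) xh uh := by
      refine ⟨fun j t ht => ?_, fun j => ?_, hxhFeas.2.2⟩
      · by_cases hji : j = i
        · subst hji; rw [Function.update_self]; exact hcase.1 t ht
        · rw [Function.update_of_ne hji]; exact hxhFeas.1 j t ht
      · by_cases hji : j = i
        · subst hji; rw [Function.update_self]; exact hcase.2
        · rw [Function.update_of_ne hji]; exact hxhFeas.2.1 j
    have key := hxbOpt xh uh hfeas
    rw [hwelfare, hwelfare] at key
    rw [hpay, hpay]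
    linarith
  · rw [if_neg hcase]
    have : (⊥ : EReal) - ((pay xh uh : ℝ) : EReal) = ⊥ := by
      rw [sub_eq_add_neg, ← EReal.coe_neg, EReal.bot_add]
    rw [this]
    exact bot_le
end

section
/- Let T ≥ 1 and fix 0 < m ≤ M and v̄ > 0. Let Wᵢ (i ∈ ℕ, i ≥ 1) be symmetric negative definite T×T real matrices with −M·I ⪯ Wᵢ ⪯ −m·I, and Vᵢ ∈ ℝ^T with ‖Vᵢ‖ ≤ v̄. For each N ≥ 2 let F_total(N) be the optimal value of: maximize Σ_{i=1}^N (ΩᵢᵀWᵢΩᵢ + VᵢᵀΩᵢ) over (Ω₁,…,Ω_N) ∈ (ℝ^T)^N subject to Σ_{i=1}^N Ωᵢ = 0, and for each i ≤ N let Hᵢ(N) be the optimal value of the analogous problem over the agents j ≤ N with j ≠ i, subject to Σ_{j≠i} Ω_j = 0. Assume that for every N: F_total(N) > 0, Hᵢ(N) > 0 for all i ≤ N, and (N−1)·max_{i≤N} Hᵢ(N) ≤ Σ_{i=1}^N Hᵢ(N). Then lim_{N→∞} (N−1)·F_total(N)/Σ_{i=1}^N Hᵢ(N) = 1 and lim_{N→∞}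 F_total(N)/max_{i≤N} Hᵢ(N) = 1; consequently any sequence c^N in the interval [(N−1)·F_total(N)/ΣᵢHᵢ(N), F_total(N)/max_i Hᵢ(N)] satisfies lim_{N→∞} c^N = 1. -/
open Finset Filter Matrix


lemma psd_dot' {T : ℕ} {P : Matrix (Fin T) (Fin T) ℝ} (hP : P.PosSemidef)
    (x : Fin T → ℝ) : 0 ≤ x ⬝ᵥ (P *ᵥ x) := by simpa using hP.dotProduct_mulVec_nonneg x

lemma lin_zero' {c q : ℝ} (hq : q < 0) (h : ∀ t : ℝ, t * c + t ^ 2 * q ≤ 0) : c = 0 := by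
  have h0 := h (-c / (2 * q))
  have hq' : q ≠ 0 := ne_of_lt hq
  have key : c ^ 2 ≤ 0 := by
    have e : (-c / (2 * q)) * c + (-c / (2 * q)) ^ 2 * q = c ^ 2 / (-4 * q) := by
      field_simp; ring
    rw [e] at h0
    have hpos : 0 < -4 * q := by linarith
    have := (div_le_iff₀ hpos).mp h0
    linarith
  nlinarith [sq_nonneg c]

lemma quad_expand' {T : ℕ} {A : Matrix (Fin T) (Fin T) ℝ} (hA : A.IsSymm)
    (v x d : Fin T → ℝ) :
    (x + d) ⬝ᵥ (A *ᵥ (x + d)) + v ⬝ᵥ (x + d)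
      = (x ⬝ᵥ (A *ᵥ x) + v ⬝ᵥ x) + (2 * (d ⬝ᵥ (A *ᵥ x)) + v ⬝ᵥ d) + d ⬝ᵥ (A *ᵥ d) := by
  have hsym : x ⬝ᵥ (A *ᵥ d) = d ⬝ᵥ (A *ᵥ x) := by
    rw [dotProduct_mulVec, ← mulVec_transpose, hA.eq, dotProduct_comm]
  rw [mulVec_add, dotProduct_add, add_dotProduct, add_dotProduct, dotProduct_add]
  rw [hsym]; ring

lemma dot_upper' {T : ℕ} {A : Matrix (Fin T) (Fin T) ℝ} {μ : ℝ}
    (h : (-(μ • (1 : Matrix (Fin T) (Fin T) ℝ)) - A).PosSemidef) (x : Fin T → ℝ) :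
    x ⬝ᵥ (A *ᵥ x) ≤ -μ * (x ⬝ᵥ x) := by
  have h0 := psd_dot' h x
  simp only [sub_mulVec, neg_mulVec, smul_mulVec, one_mulVec, dotProduct_sub,
    dotProduct_neg, dotProduct_smul, smul_eq_mul] at h0
  linarith

lemma dot_lower' {T : ℕ} {A : Matrix (Fin T) (Fin T) ℝ} {μ : ℝ}
    (h : (A + μ • (1 : Matrix (Fin T) (Fin T) ℝ)).PosSemidef) (x : Fin T → ℝ) :
    -μ * (x ⬝ᵥ x) ≤ x ⬝ᵥ (A *ᵥ x) := by
  have h0 := psd_dot' h x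
  simp only [add_mulVec, smul_mulVec, one_mulVec, dotProduct_add,
    dotProduct_smul, smul_eq_mul] at h0
  linarith

lemma dot_sum' {T : ℕ} {ι : Type*} (s : Finset ι) (g : Fin T → ℝ) (w : ι → Fin T → ℝ) :
    g ⬝ᵥ (∑ j ∈ s, w j) = ∑ j ∈ s, g ⬝ᵥ w j := by
  simp only [dotProduct, Finset.sum_apply, Finset.mul_sum]
  exact Finset.sum_comm

lemma key_bounds_s11 {T : ℕ} {m M : ℝ} (hm : 0 < m) (hmM : m ≤ M)
    (W : ℕ → Matrix (Fin T) (Fin T) ℝ) (V : ℕ → Fin T → ℝ)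
    (hWsymm : ∀ i : ℕ, 1 ≤ i → (W i).IsSymm)
    (hWlo : ∀ i : ℕ, 1 ≤ i → (W i + M • (1 : Matrix (Fin T) (Fin T) ℝ)).PosSemidef)
    (hWhi : ∀ i : ℕ, 1 ≤ i → (-(m • (1 : Matrix (Fin T) (Fin T) ℝ)) - W i).PosSemidef)
    (F HM : ℝ) (Hf : ℕ → ℝ) (N : ℕ) (hN : 2 ≤ N)
    (hF : IsGreatest {v : ℝ | ∃ Ω : ℕ → Fin T → ℝ, ∑ j ∈ Finset.Icc 1 N, Ω j = 0 ∧
        v = ∑ j ∈ Finset.Icc 1 N, (Ω j ⬝ᵥ (W j *ᵥ Ω j) + V j ⬝ᵥ Ω j)} F)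
    (hHf : ∀ i ∈ Finset.Icc 1 N, IsGreatest
      {v : ℝ | ∃ Ω : ℕ → Fin T → ℝ, ∑ j ∈ (Finset.Icc 1 N).erase i, Ω j = 0 ∧
        v = ∑ j ∈ (Finset.Icc 1 N).erase i, (Ω j ⬝ᵥ (W j *ᵥ Ω j) + V j ⬝ᵥ Ω j)} (Hf i))
    (hHM : IsGreatest {v : ℝ | ∃ i ∈ Finset.Icc 1 N, v = Hf i} HM) :
    F * (1 - (M / m) / ((N : ℝ) - 1)) ≤ HM ∧ HM ≤ F := by
  have h1N : (1 : ℕ) ∈ Finset.Icc 1 N := by simp [Finset.mem_Icc]; omega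
  have hcard : (Finset.Icc 1 N).card = N := by simp
  have hmone : ∀ j ∈ Finset.Icc 1 N, 1 ≤ j := fun j hj => (Finset.mem_Icc.mp hj).1
  have hNR : (2 : ℝ) ≤ (N : ℝ) := by exact_mod_cast hN
  have hn1 : (1 : ℝ) ≤ (N : ℝ) - 1 := by linarith
  have hn0 : ((N : ℝ) - 1) ≠ 0 := by linarith
  obtain ⟨⟨i0, hi0, hHMeq⟩, hHMub⟩ := hHM
  have hHMleF : HM ≤ F := by
    obtain ⟨⟨Ψ, hΨsum, hΨval⟩, -⟩ := hHf i0 hi0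
    set Ψ' : ℕ → Fin T → ℝ := fun j => if j = i0 then 0 else Ψ j with hΨ'
    have hagree : ∀ j ∈ (Finset.Icc 1 N).erase i0, Ψ' j = Ψ j := fun j hj => by
      simp [hΨ', (Finset.mem_erase.mp hj).1]
    have hsum' : ∑ j ∈ Finset.Icc 1 N, Ψ' j = 0 := by
      rw [← Finset.sum_erase_add _ _ hi0, Finset.sum_congr rfl hagree, hΨsum]
      simp [hΨ']
    have hFge := hF.2 ⟨Ψ', hsum', rfl⟩
    have hveq : ∑ j ∈ Finset.Icc 1 N, (Ψ' j ⬝ᵥ (W j *ᵥ Ψ' j) + V j ⬝ᵥ Ψ' j) = Hf i0 := by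
      rw [← Finset.sum_erase_add _ _ hi0,
        Finset.sum_congr rfl (fun j hj => by rw [hagree j hj]), ← hΨval]
      simp [hΨ']
    rw [hHMeq, ← hveq]
    exact hFge
  refine ⟨?_, hHMleF⟩
  obtain ⟨⟨Ω, hΩsum, hΩval⟩, hFub⟩ := hF
  set g : ℕ → Fin T → ℝ := fun j => (2 : ℝ) • (W j *ᵥ Ω j) + V j with hgdef
  have hglin : ∀ j (u : Fin T → ℝ),
      g j ⬝ᵥ u = 2 * (u ⬝ᵥ (W j *ᵥ Ω j)) + V j ⬝ᵥ u := fun j u => by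
    rw [hgdef]
    simp [add_dotProduct, smul_dotProduct, dotProduct_comm (W j *ᵥ Ω j) u]
  -- first-order conditions
  have hgeq : ∀ j ∈ Finset.Icc 1 N, ∀ k ∈ Finset.Icc 1 N, g j = g k := by
    intro j hj k hk
    rcases eq_or_ne j k with rfl | hjk
    · rfl
    funext a
    set u : Fin T → ℝ := Pi.single a 1 with hu
    have huu : u ⬝ᵥ u = 1 := by simp [hu, dotProduct_single]
    set q : ℝ := u ⬝ᵥ (W j *ᵥ u) + u ⬝ᵥ (W k *ᵥ u) with hq
    have hqneg : q < 0 := by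
      have h1 := dot_upper' (hWhi j (hmone j hj)) u
      have h2 := dot_upper' (hWhi k (hmone k hk)) u
      rw [huu] at h1 h2
      rw [hq]; linarith
    have hcoord : (g j - g k) ⬝ᵥ u = 0 := by
      refine lin_zero' hqneg ?_
      intro t
      set Ω' : ℕ → Fin T → ℝ :=
        fun l => Ω l + (if l = j then t • u else 0) + (if l = k then -(t • u) else 0) with hΩ'
      have hsum' : ∑ l ∈ Finset.Icc 1 N, Ω' l = 0 := by
        simp only [hΩ']
        rw [Finset.sum_add_distrib, Finset.sum_add_distrib, hΩsum,
          Finset.sum_ite_eq' (Finset.Icc 1 N) j (fun _ => t • u),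
          Finset.sum_ite_eq' (Finset.Icc 1 N) k (fun _ => -(t • u))]
        simp [hj, hk]
      have hub := hFub ⟨Ω', hsum', rfl⟩
      have hpt : ∀ l ∈ Finset.Icc 1 N, Ω' l ⬝ᵥ (W l *ᵥ Ω' l) + V l ⬝ᵥ Ω' l
          = (Ω l ⬝ᵥ (W l *ᵥ Ω l) + V l ⬝ᵥ Ω l)
            + (if l = j then t * (g j ⬝ᵥ u) + t ^ 2 * (u ⬝ᵥ (W j *ᵥ u)) else 0)
            + (if l = k then -(t * (g k ⬝ᵥ u)) + t ^ 2 * (u ⬝ᵥ (W k *ᵥ u)) else 0) := by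
        intro l hl
        rcases eq_or_ne l j with rfl | hlj
        · have hl' : Ω' l = Ω l + t • u := by simp [hΩ', hjk]
          rw [hl', quad_expand' (hWsymm l (hmone l hl)), if_pos rfl, if_neg hjk, hglin l]
          simp only [smul_dotProduct, dotProduct_smul, mulVec_smul, smul_eq_mul]
          ring
        rcases eq_or_ne l k with rfl | hlk
        · have hl' : Ω' l = Ω l + (-t) • u := by simp [hΩ', hlj, neg_smul]
          rw [hl', quad_expand' (hWsymm l (hmone l hl)), if_neg hlj, if_pos rfl, hglin l]
          simp only [smul_dotProduct, dotProduct_smul, mulVec_smul, smul_eq_mul]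
          ring
        · have hl' : Ω' l = Ω l := by simp [hΩ', hlj, hlk]
          rw [hl', if_neg hlj, if_neg hlk]
          ring
      have hval' : ∑ l ∈ Finset.Icc 1 N, (Ω' l ⬝ᵥ (W l *ᵥ Ω' l) + V l ⬝ᵥ Ω' l)
          = F + (t * ((g j - g k) ⬝ᵥ u) + t ^ 2 * q) := by
        rw [Finset.sum_congr rfl hpt, Finset.sum_add_distrib, Finset.sum_add_distrib,
          Finset.sum_ite_eq' (Finset.Icc 1 N) j, Finset.sum_ite_eq' (Finset.Icc 1 N) k,
          if_pos hj, if_pos hk, ← hΩval, sub_dotProduct, hq]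
        ring
      rw [hval'] at hub
      linarith
    have := hcoord
    rw [hu, dotProduct_single] at this
    have h2 : (g j - g k) a = 0 := by linarith [this]
    have := sub_eq_zero.mp (by simpa using h2)
    exact this
  -- minimizing index
  obtain ⟨i, hi, hminQ⟩ := Finset.exists_min_image (Finset.Icc 1 N)
    (fun j => Ω j ⬝ᵥ Ω j) ⟨1, h1N⟩
  set Q : ℝ := Ω i ⬝ᵥ Ω i with hQdef
  have hQ0 : 0 ≤ Q := by simpa using dotProduct_star_self_nonneg (Ω i)
  have hsumlin : ∑ j ∈ Finset.Icc 1 N, g i ⬝ᵥ Ω j = 0 := by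
    rw [← dot_sum', hΩsum, dotProduct_zero]
  have hFid : F = - ∑ j ∈ Finset.Icc 1 N, Ω j ⬝ᵥ (W j *ᵥ Ω j) := by
    have hpt : ∀ j ∈ Finset.Icc 1 N, Ω j ⬝ᵥ (W j *ᵥ Ω j) + V j ⬝ᵥ Ω j
        = g i ⬝ᵥ Ω j - Ω j ⬝ᵥ (W j *ᵥ Ω j) := by
      intro j hj
      rw [← hgeq j hj i hi, hglin j]
      ring
    rw [hΩval, Finset.sum_congr rfl hpt, Finset.sum_sub_distrib, hsumlin, zero_sub]
  have hFQ : m * ((N : ℝ) * Q) ≤ F := by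
    have h1 : ∀ j ∈ Finset.Icc 1 N, m * (Ω j ⬝ᵥ Ω j) ≤ -(Ω j ⬝ᵥ (W j *ᵥ Ω j)) := by
      intro j hj
      have := dot_upper' (hWhi j (hmone j hj)) (Ω j)
      linarith
    have h2 : ∑ j ∈ Finset.Icc 1 N, m * (Ω j ⬝ᵥ Ω j)
        ≤ ∑ j ∈ Finset.Icc 1 N, -(Ω j ⬝ᵥ (W j *ᵥ Ω j)) := Finset.sum_le_sum h1
    have h3 : (N : ℝ) * Q ≤ ∑ j ∈ Finset.Icc 1 N, Ω j ⬝ᵥ Ω j := by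
      have := Finset.card_nsmul_le_sum (Finset.Icc 1 N) (fun j => Ω j ⬝ᵥ Ω j) Q hminQ
      rw [hcard, nsmul_eq_mul] at this
      exact this
    have h4 : m * ((N : ℝ) * Q) ≤ m * ∑ j ∈ Finset.Icc 1 N, Ω j ⬝ᵥ Ω j :=
      mul_le_mul_of_nonneg_left h3 hm.le
    rw [Finset.mul_sum] at h4
    rw [hFid, ← Finset.sum_neg_distrib]
    exact h4.trans h2
  -- the shifted point for problem i
  set d : Fin T → ℝ := ((N : ℝ) - 1)⁻¹ • Ω i with hd
  have hnd : ((N : ℝ) - 1) • d = Ω i := by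
    rw [hd, smul_smul, mul_inv_cancel₀ hn0, one_smul]
  have hcard' : ((Finset.Icc 1 N).erase i).card = N - 1 := by
    rw [Finset.card_erase_of_mem hi, hcard]
  have hcastN : ((N - 1 : ℕ) : ℝ) = (N : ℝ) - 1 := by
    push_cast [Nat.cast_sub (by omega : 1 ≤ N)]
    ring
  have hsum'' : ∑ j ∈ (Finset.Icc 1 N).erase i, (Ω j + d) = 0 := by
    have hOe : ∑ j ∈ (Finset.Icc 1 N).erase i, Ω j + Ω i = 0 := by
      rw [Finset.sum_erase_add _ _ hi, hΩsum]
    rw [Finset.sum_add_distrib, Finset.sum_const, hcard',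
      ← Nat.cast_smul_eq_nsmul ℝ, hcastN, hnd]
    exact hOe
  have hHige := (hHf i hi).2 ⟨fun j => Ω j + d, hsum'', rfl⟩
  have hpt2 : ∀ j ∈ (Finset.Icc 1 N).erase i,
      (fun j => Ω j + d) j ⬝ᵥ (W j *ᵥ (fun j => Ω j + d) j) + V j ⬝ᵥ (fun j => Ω j + d) j
      = (Ω j ⬝ᵥ (W j *ᵥ Ω j) + V j ⬝ᵥ Ω j) + g i ⬝ᵥ d + d ⬝ᵥ (W j *ᵥ d) := by
    intro j hj
    have hjI : j ∈ Finset.Icc 1 N := Finset.mem_of_mem_erase hj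
    show (Ω j + d) ⬝ᵥ (W j *ᵥ (Ω j + d)) + V j ⬝ᵥ (Ω j + d) = _
    rw [quad_expand' (hWsymm j (hmone j hjI)), ← hgeq j hjI i hi, hglin j]
  have hbase : ∑ j ∈ (Finset.Icc 1 N).erase i, (Ω j ⬝ᵥ (W j *ᵥ Ω j) + V j ⬝ᵥ Ω j)
      = F - (Ω i ⬝ᵥ (W i *ᵥ Ω i) + V i ⬝ᵥ Ω i) := by
    have := Finset.sum_erase_add (Finset.Icc 1 N)
      (fun j => Ω j ⬝ᵥ (W j *ᵥ Ω j) + V j ⬝ᵥ Ω j) hi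
    rw [← hΩval] at this
    linarith [show (∑ j ∈ (Finset.Icc 1 N).erase i, (Ω j ⬝ᵥ (W j *ᵥ Ω j) + V j ⬝ᵥ Ω j))
      + (Ω i ⬝ᵥ (W i *ᵥ Ω i) + V i ⬝ᵥ Ω i) = F from this]
  have hgid : ((N : ℝ) - 1) * (g i ⬝ᵥ d) = (Ω i ⬝ᵥ (W i *ᵥ Ω i) + V i ⬝ᵥ Ω i)
      + Ω i ⬝ᵥ (W i *ᵥ Ω i) := by
    have h1 : g i ⬝ᵥ d = ((N : ℝ) - 1)⁻¹ * (g i ⬝ᵥ Ω i) := by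
      rw [hd, dotProduct_smul, smul_eq_mul]
    rw [h1, hglin i, ← mul_assoc, mul_inv_cancel₀ hn0, one_mul]
    ring
  have hval'' : ∑ j ∈ (Finset.Icc 1 N).erase i,
      ((fun j => Ω j + d) j ⬝ᵥ (W j *ᵥ (fun j => Ω j + d) j) + V j ⬝ᵥ (fun j => Ω j + d) j)
      = F + Ω i ⬝ᵥ (W i *ᵥ Ω i) + ∑ j ∈ (Finset.Icc 1 N).erase i, d ⬝ᵥ (W j *ᵥ d) := by
    rw [Finset.sum_congr rfl hpt2, Finset.sum_add_distrib, Finset.sum_add_distrib,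
      hbase, Finset.sum_const, hcard', nsmul_eq_mul, hcastN, hgid]
    ring
  have hdd : d ⬝ᵥ d = ((N : ℝ) - 1)⁻¹ * (((N : ℝ) - 1)⁻¹ * Q) := by
    rw [hd, smul_dotProduct, dotProduct_smul, hQdef]
    simp [smul_eq_mul]
  have hsumd : -(((N : ℝ) - 1) * (M * (d ⬝ᵥ d)))
      ≤ ∑ j ∈ (Finset.Icc 1 N).erase i, d ⬝ᵥ (W j *ᵥ d) := by
    have h1 : ∀ j ∈ (Finset.Icc 1 N).erase i, -(M * (d ⬝ᵥ d)) ≤ d ⬝ᵥ (W j *ᵥ d) := by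
      intro j hj
      have := dot_lower' (hWlo j (hmone j (Finset.mem_of_mem_erase hj))) d
      linarith
    have := Finset.card_nsmul_le_sum ((Finset.Icc 1 N).erase i)
      (fun j => d ⬝ᵥ (W j *ᵥ d)) (-(M * (d ⬝ᵥ d))) h1
    rw [hcard', nsmul_eq_mul, hcastN] at this
    linarith
  have hWii : -(M * Q) ≤ Ω i ⬝ᵥ (W i *ᵥ Ω i) := by
    have := dot_lower' (hWlo i (hmone i hi)) (Ω i)
    rw [← hQdef] at this
    linarith
  have hHf_lb : F - M * Q * (1 + ((N : ℝ) - 1)⁻¹) ≤ Hf i := by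
    rw [hval''] at hHige
    have e : ((N : ℝ) - 1) * (M * (d ⬝ᵥ d)) = M * Q * ((N : ℝ) - 1)⁻¹ := by
      rw [hdd]
      field_simp
    rw [e] at hsumd
    nlinarith [hsumd, hWii]
  have hHMge : Hf i ≤ HM := hHMub ⟨i, hi, rfl⟩
  -- final arithmetic
  have hMpos : 0 < M := lt_of_lt_of_le hm hmM
  have hstep : F * (1 - (M / m) / ((N : ℝ) - 1)) ≤ F - M * Q * (1 + ((N : ℝ) - 1)⁻¹) := by
    have hninv : (0 : ℝ) < ((N : ℝ) - 1)⁻¹ := by positivity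
    have hQn : Q * (N : ℝ) ≤ F / m := (le_div_iff₀ hm).2 (by nlinarith [hFQ])
    have h1 : M * (Q * (N : ℝ)) ≤ M * (F / m) := mul_le_mul_of_nonneg_left hQn hMpos.le
    have h2 : M * (Q * (N : ℝ)) * ((N : ℝ) - 1)⁻¹ ≤ M * (F / m) * ((N : ℝ) - 1)⁻¹ :=
      mul_le_mul_of_nonneg_right h1 hninv.le
    have e1 : M * Q * (1 + ((N : ℝ) - 1)⁻¹) = M * (Q * (N : ℝ)) * ((N : ℝ) - 1)⁻¹ := by
      field_simp
      ring
    have e2 : F * (1 - (M / m) / ((N : ℝ) - 1)) = F - M * (F / m) * ((N : ℝ) - 1)⁻¹ := by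
      field_simp
    rw [e1, e2]
    linarith
  linarith

/-- **Theorem 4, part 1 (block-quadratic form).** For agents with quadratic
utilities `ΩᵢᵀWᵢΩᵢ + VᵢᵀΩᵢ` over a horizon `T` with symmetric uniformly bounded
negative definite `Wᵢ` and bounded `Vᵢ`, both endpoints of the Scaled VCG interval
converge to `1`, hence any admissible scaling sequence `c^N` converges to `1`. -/
theorem scaled_vcg_factor_tendsto_one_dynamic
    (T : ℕ) (hT : 1 ≤ T)
    (m M vbar : ℝ) (hm : 0 < m) (hmM : m ≤ M) (hvbar : 0 < vbar)
    (W : ℕ → Matrix (Fin T) (Fin T) ℝ) (V : ℕ → Fin T → ℝ)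
    (hWsymm : ∀ i : ℕ, 1 ≤ i → (W i).IsSymm)
    (hWlo : ∀ i : ℕ, 1 ≤ i →
      (W i + M • (1 : Matrix (Fin T) (Fin T) ℝ)).PosSemidef)
    (hWhi : ∀ i : ℕ, 1 ≤ i →
      (-(m • (1 : Matrix (Fin T) (Fin T) ℝ)) - W i).PosSemidef)
    (hV : ∀ i : ℕ, 1 ≤ i → ‖V i‖ ≤ vbar)
    (Ftot : ℕ → ℝ) (H : ℕ → ℕ → ℝ) (Hmax : ℕ → ℝ)
    (hFtot : ∀ N : ℕ, 2 ≤ N → IsGreatest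
      {v : ℝ | ∃ Ω : ℕ → Fin T → ℝ, ∑ j ∈ Finset.Icc 1 N, Ω j = 0 ∧
        v = ∑ j ∈ Finset.Icc 1 N, (Ω j ⬝ᵥ (W j *ᵥ Ω j) + V j ⬝ᵥ Ω j)} (Ftot N))
    (hH : ∀ N : ℕ, 2 ≤ N → ∀ i ∈ Finset.Icc 1 N, IsGreatest
      {v : ℝ | ∃ Ω : ℕ → Fin T → ℝ, ∑ j ∈ (Finset.Icc 1 N).erase i, Ω j = 0 ∧
        v = ∑ j ∈ (Finset.Icc 1 N).erase i,
          (Ω j ⬝ᵥ (W j *ᵥ Ω j) + V j ⬝ᵥ Ω j)} (H N i))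
    (hHmax : ∀ N : ℕ, 2 ≤ N → IsGreatest
      {v : ℝ | ∃ i ∈ Finset.Icc 1 N, v = H N i} (Hmax N))
    (hFpos : ∀ N : ℕ, 2 ≤ N → 0 < Ftot N)
    (hHpos : ∀ N : ℕ, 2 ≤ N → ∀ i ∈ Finset.Icc 1 N, 0 < H N i)
    (hMPB : ∀ N : ℕ, 2 ≤ N →
      ((N : ℝ) - 1) * Hmax N ≤ ∑ i ∈ Finset.Icc 1 N, H N i) :
    Tendsto (fun N : ℕ => ((N : ℝ) - 1) * Ftot N / ∑ i ∈ Finset.Icc 1 N, H N i)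
        atTop (nhds 1) ∧
      Tendsto (fun N : ℕ => Ftot N / Hmax N) atTop (nhds 1) ∧
      ∀ c : ℕ → ℝ,
        (∀ N : ℕ, 2 ≤ N →
          ((N : ℝ) - 1) * Ftot N / (∑ i ∈ Finset.Icc 1 N, H N i) ≤ c N ∧
            c N ≤ Ftot N / Hmax N) →
        Tendsto c atTop (nhds 1) := by
  have key : ∀ N : ℕ, 2 ≤ N →
      Ftot N * (1 - (M / m) / ((N : ℝ) - 1)) ≤ Hmax N ∧ Hmax N ≤ Ftot N :=
    fun N hN => key_bounds_s11 hm hmM W V hWsymm hWlo hWhi (Ftot N) (Hmax N) (H N) N hN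
      (hFtot N hN) (hH N hN) (hHmax N hN)
  have hHmaxpos : ∀ N : ℕ, 2 ≤ N → 0 < Hmax N := by
    intro N hN
    obtain ⟨⟨i, hi, hEq⟩, -⟩ := hHmax N hN
    rw [hEq]; exact hHpos N hN i hi
  have hSpos : ∀ N : ℕ, 2 ≤ N → 0 < ∑ i ∈ Finset.Icc 1 N, H N i := by
    intro N hN
    exact Finset.sum_pos (fun i hi => hHpos N hN i hi) ⟨1, by simp [Finset.mem_Icc]; omega⟩
  have hSub : ∀ N : ℕ, 2 ≤ N → ∑ i ∈ Finset.Icc 1 N, H N i ≤ (N : ℝ) * Hmax N := by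
    intro N hN
    have h1 : ∀ i ∈ Finset.Icc 1 N, H N i ≤ Hmax N := fun i hi => (hHmax N hN).2 ⟨i, hi, rfl⟩
    have h2 := Finset.sum_le_card_nsmul (Finset.Icc 1 N) (H N) (Hmax N) h1
    have hcard : (Finset.Icc 1 N).card = N := by simp
    rw [hcard, nsmul_eq_mul] at h2
    exact_mod_cast h2
  -- ratio Ftot/Hmax → 1
  have hElim : Tendsto (fun N : ℕ => (1 - (M / m) / ((N : ℝ) - 1))⁻¹) atTop (nhds 1) := by
    have h1 : Tendsto (fun N : ℕ => (N : ℝ) - 1) atTop atTop := by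
      simpa [sub_eq_add_neg] using tendsto_atTop_add_const_right atTop (-1 : ℝ) tendsto_natCast_atTop_atTop
    have h2 : Tendsto (fun N : ℕ => (M / m) / ((N : ℝ) - 1)) atTop (nhds 0) :=
      Tendsto.div_atTop tendsto_const_nhds h1
    have h3 : Tendsto (fun N : ℕ => 1 - (M / m) / ((N : ℝ) - 1)) atTop (nhds 1) := by
      simpa using (tendsto_const_nhds (x := (1 : ℝ)) (f := atTop)).sub h2
    simpa using h3.inv₀ one_ne_zero
  have hposev : ∀ᶠ N : ℕ in atTop, (M / m) / ((N : ℝ) - 1) < 1 := by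
    have h1 : Tendsto (fun N : ℕ => (N : ℝ) - 1) atTop atTop := by
      simpa [sub_eq_add_neg] using tendsto_atTop_add_const_right atTop (-1 : ℝ) tendsto_natCast_atTop_atTop
    have h2 : Tendsto (fun N : ℕ => (M / m) / ((N : ℝ) - 1)) atTop (nhds 0) :=
      Tendsto.div_atTop tendsto_const_nhds h1
    exact h2.eventually_lt_const one_pos
  have hr : Tendsto (fun N : ℕ => Ftot N / Hmax N) atTop (nhds 1) := by
    refine tendsto_of_tendsto_of_tendsto_of_le_of_le' tendsto_const_nhds hElim ?_ ?_
    · filter_upwards [eventually_ge_atTop 2] with N hN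
      exact (one_le_div (hHmaxpos N hN)).2 (key N hN).2
    · filter_upwards [eventually_ge_atTop 2, hposev] with N hN hlt
      have hpos1 : 0 < 1 - (M / m) / ((N : ℝ) - 1) := by linarith
      have h4 : Ftot N ≤ Hmax N / (1 - (M / m) / ((N : ℝ) - 1)) :=
        (le_div_iff₀ hpos1).2 (key N hN).1
      rw [div_le_iff₀ (hHmaxpos N hN), inv_mul_eq_div]
      exact h4
  -- lower-endpoint sequence
  have hLup : ∀ N : ℕ, 2 ≤ N →
      ((N : ℝ) - 1) * Ftot N / ∑ i ∈ Finset.Icc 1 N, H N i ≤ Ftot N / Hmax N := by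
    intro N hN
    have hNR : (2 : ℝ) ≤ (N : ℝ) := by exact_mod_cast hN
    have hn0 : ((N : ℝ) - 1) ≠ 0 := by linarith
    have hden : 0 < ((N : ℝ) - 1) * Hmax N := by
      have := hHmaxpos N hN; nlinarith
    have h1 : ((N : ℝ) - 1) * Ftot N / ∑ i ∈ Finset.Icc 1 N, H N i
        ≤ ((N : ℝ) - 1) * Ftot N / (((N : ℝ) - 1) * Hmax N) := by
      apply div_le_div_of_nonneg_left _ hden (hMPB N hN)
      nlinarith [hFpos N hN]
    rw [mul_div_mul_left _ _ hn0] at h1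
    exact h1
  have hLlo : ∀ N : ℕ, 2 ≤ N →
      (1 - 1 / (N : ℝ)) * (Ftot N / Hmax N)
        ≤ ((N : ℝ) - 1) * Ftot N / ∑ i ∈ Finset.Icc 1 N, H N i := by
    intro N hN
    have hNR : (2 : ℝ) ≤ (N : ℝ) := by exact_mod_cast hN
    have hN0 : ((N : ℝ)) ≠ 0 := by linarith
    have hHm := hHmaxpos N hN
    have hden : 0 < (N : ℝ) * Hmax N := by nlinarith
    have he : (1 - 1 / (N : ℝ)) * (Ftot N / Hmax N)
        = ((N : ℝ) - 1) * Ftot N / ((N : ℝ) * Hmax N) := by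
      field_simp
    rw [he]
    apply div_le_div_of_nonneg_left _ (hSpos N hN) (hSub N hN)
    nlinarith [hFpos N hN]
  have hlower : Tendsto (fun N : ℕ => (1 - 1 / (N : ℝ)) * (Ftot N / Hmax N)) atTop (nhds 1) := by
    have h1 : Tendsto (fun N : ℕ => 1 - 1 / (N : ℝ)) atTop (nhds 1) := by
      simpa using (tendsto_const_nhds (x := (1 : ℝ)) (f := atTop)).sub
        tendsto_one_div_atTop_nhds_zero_nat
    simpa using h1.mul hr
  have hL : Tendsto (fun N : ℕ => ((N : ℝ) - 1) * Ftot N / ∑ i ∈ Finset.Icc 1 N, H N i)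
      atTop (nhds 1) := by
    refine tendsto_of_tendsto_of_tendsto_of_le_of_le' hlower hr ?_ ?_
    · filter_upwards [eventually_ge_atTop 2] with N hN using hLlo N hN
    · filter_upwards [eventually_ge_atTop 2] with N hN using hLup N hN
  refine ⟨hL, hr, ?_⟩
  intro c hc
  refine tendsto_of_tendsto_of_tendsto_of_le_of_le' hL hr ?_ ?_
  · filter_upwards [eventually_ge_atTop 2] with N hN using (hc N hN).1
  · filter_upwards [eventually_ge_atTop 2] with N hN using (hc N hN).2
end

section
/- Let T ≥ 1 and fix 0 < m ≤ M and v̄ > 0. Let Wᵢ (i ∈ ℕ, i ≥ 1) be symmetric negative definite T×T real matrices with −M·I ⪯ Wᵢ ⪯ −m·I, and Vᵢ ∈ ℝ^T with ‖Vᵢ‖ ≤ v̄. For each N ≥ 2 let Ω*(N) = (Ω*₁(N),…,Ω*_N(N)) ∈ (ℝ^T)^N be the unique maximizer of Σ_{i=1}^N (ΩᵢᵀWᵢΩᵢ + VᵢᵀΩᵢ) subject to Σ_{i=1}^N Ωᵢ = 0, and let Ψ*(N) = (Ψ*₂(N),…,Ψ*_N(N)) be the unique maximizer of Σ_{i=2}^N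 (ΩᵢᵀWᵢΩᵢ + VᵢᵀΩᵢ) subject to Σ_{i=2}^N Ωᵢ = 0. Define Γ(N) := (Σ_{i=1}^N Wᵢ⁻¹)⁻¹, the Lagrange multiplier vector λ*(N) := Γ(N)·Σ_{i=1}^N Wᵢ⁻¹Vᵢ ∈ ℝ^T, and the VCG payment of agent 1 as p₁(N) := Σ_{i=2}^N (Ψ*ᵢ(N)ᵀWᵢΨ*ᵢ(N) + VᵢᵀΨ*ᵢ(N)) − Σ_{i=2}^N (Ω*ᵢ(N)ᵀWᵢΩ*ᵢ(N) + VᵢᵀΩ*ᵢ(N)). Then lim_{N→∞} (λ*(N)ᵀΩ*₁(N) − p₁(N)) = 0. -/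
open Finset Filter Matrix

namespace VCGAux

variable {T : ℕ}

/-- Euclidean norm on `Fin T → ℝ`. -/
noncomputable def qe (x : Fin T → ℝ) : ℝ :=
  ‖(WithLp.linearEquiv 2 ℝ (Fin T → ℝ)).symm x‖

lemma qe_nonneg (x : Fin T → ℝ) : 0 ≤ qe x := norm_nonneg _

lemma dot_eq_inner (x y : Fin T → ℝ) :
    x ⬝ᵥ y = inner ℝ ((WithLp.linearEquiv 2 ℝ (Fin T → ℝ)).symm x)
      ((WithLp.linearEquiv 2 ℝ (Fin T → ℝ)).symm y) := by
  simp [PiLp.inner_apply, RCLike.inner_apply, dotProduct, mul_comm]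

lemma dot_self_eq (x : Fin T → ℝ) : x ⬝ᵥ x = qe x ^ 2 := by
  rw [dot_eq_inner]; exact real_inner_self_eq_norm_sq _

lemma dot_self_nonneg (x : Fin T → ℝ) : 0 ≤ x ⬝ᵥ x := by
  rw [dot_self_eq]; positivity

lemma abs_dot_le (x y : Fin T → ℝ) : |x ⬝ᵥ y| ≤ qe x * qe y := by
  rw [dot_eq_inner]; exact abs_real_inner_le_norm _ _

lemma qe_neg (x : Fin T → ℝ) : qe (-x) = qe x := by
  unfold qe; rw [map_neg, norm_neg]

lemma qe_sub_le (x y : Fin T → ℝ) : qe (x - y) ≤ qe x + qe y := by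
  unfold qe; rw [map_sub]; exact norm_sub_le _ _

lemma qe_sum_le (s : Finset ℕ) (f : ℕ → Fin T → ℝ) :
    qe (∑ i ∈ s, f i) ≤ ∑ i ∈ s, qe (f i) := by
  unfold qe; rw [map_sum]; exact norm_sum_le _ _

lemma qe_sup_bound (x : Fin T → ℝ) {C : ℝ} (hC : 0 ≤ C) (h : ∀ j, |x j| ≤ C) :
    qe x ≤ Real.sqrt T * C := by
  have h1 : qe x ^ 2 ≤ (T : ℝ) * C ^ 2 := by
    rw [← dot_self_eq]
    have : x ⬝ᵥ x = ∑ j, x j * x j := rfl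
    rw [this]
    calc ∑ j, x j * x j ≤ ∑ _j : Fin T, C ^ 2 := by
          refine Finset.sum_le_sum fun j _ => ?_
          have := h j
          nlinarith [abs_nonneg (x j), neg_abs_le (x j), le_abs_self (x j)]
      _ = (T : ℝ) * C ^ 2 := by simp [mul_comm]
  have h2 : (Real.sqrt T * C) ^ 2 = (T : ℝ) * C ^ 2 := by
    rw [mul_pow, Real.sq_sqrt (Nat.cast_nonneg T)]
  nlinarith [qe_nonneg x, Real.sqrt_nonneg (T : ℝ), mul_nonneg (Real.sqrt_nonneg (T:ℝ)) hC]

lemma sum_mulVec' (s : Finset ℕ) (A : ℕ → Matrix (Fin T) (Fin T) ℝ) (v : Fin T → ℝ) :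
    (∑ i ∈ s, A i) *ᵥ v = ∑ i ∈ s, A i *ᵥ v := by
  induction s using Finset.cons_induction with
  | empty => simp [Matrix.zero_mulVec]
  | cons a s ha ih => rw [Finset.sum_cons, Finset.sum_cons, Matrix.add_mulVec, ih]

lemma dot_sum (x : Fin T → ℝ) (s : Finset ℕ) (f : ℕ → Fin T → ℝ) :
    x ⬝ᵥ (∑ i ∈ s, f i) = ∑ i ∈ s, x ⬝ᵥ f i := by
  induction s using Finset.cons_induction with
  | empty => simp
  | cons a s ha ih => rw [Finset.sum_cons, Finset.sum_cons, dotProduct_add, ih]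

lemma symm_dot {Q : Matrix (Fin T) (Fin T) ℝ} (hQ : Qᵀ = Q) (x y : Fin T → ℝ) :
    x ⬝ᵥ (Q *ᵥ y) = y ⬝ᵥ (Q *ᵥ x) := by
  rw [Matrix.dotProduct_mulVec, ← Matrix.mulVec_transpose, hQ, dotProduct_comm]

lemma dot_expand {Q : Matrix (Fin T) (Fin T) ℝ} (hQ : Qᵀ = Q) (u w : Fin T → ℝ) :
    (Q *ᵥ u) ⬝ᵥ w = u ⬝ᵥ (Q *ᵥ w) := by
  rw [dotProduct_comm, symm_dot hQ]

lemma psd_quad {Q : Matrix (Fin T) (Fin T) ℝ} (hQ : Q.PosSemidef) (x : Fin T → ℝ) :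
    0 ≤ x ⬝ᵥ (Q *ᵥ x) := by
  have := hQ.dotProduct_mulVec_nonneg x
  simpa using this

lemma herm_transpose {Q : Matrix (Fin T) (Fin T) ℝ} (hQ : Q.IsHermitian) : Qᵀ = Q := by
  have := hQ
  rwa [Matrix.IsHermitian, Matrix.conjTranspose_eq_transpose_of_trivial] at this

lemma cs_psd {Q : Matrix (Fin T) (Fin T) ℝ} (hQ : Q.PosSemidef) (x y : Fin T → ℝ) :
    (x ⬝ᵥ (Q *ᵥ y)) ^ 2 ≤ (x ⬝ᵥ (Q *ᵥ x)) * (y ⬝ᵥ (Q *ᵥ y)) := by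
  have hQt : Qᵀ = Q := herm_transpose hQ.isHermitian
  have key : ∀ t : ℝ, 0 ≤ (y ⬝ᵥ (Q *ᵥ y)) * (t * t) + (2 * (x ⬝ᵥ (Q *ᵥ y))) * t
      + (x ⬝ᵥ (Q *ᵥ x)) := by
    intro t
    have h0 := psd_quad hQ (x + t • y)
    have expand : (x + t • y) ⬝ᵥ (Q *ᵥ (x + t • y))
        = (x ⬝ᵥ (Q *ᵥ x)) + 2 * t * (x ⬝ᵥ (Q *ᵥ y)) + t * t * (y ⬝ᵥ (Q *ᵥ y)) := by
      rw [Matrix.mulVec_add, Matrix.mulVec_smul]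
      rw [dotProduct_add, add_dotProduct, add_dotProduct, dotProduct_smul,
        smul_dotProduct, smul_dotProduct, dotProduct_smul, symm_dot hQt y x]
      simp only [smul_eq_mul]
      ring
    rw [expand] at h0
    linarith
  have hd := discrim_le_zero key
  rw [discrim] at hd
  nlinarith [hd]

lemma quad_lower_of_psd {Q : Matrix (Fin T) (Fin T) ℝ} {c : ℝ}
    (h : (Q - c • (1 : Matrix (Fin T) (Fin T) ℝ)).PosSemidef) (x : Fin T → ℝ) :
    c * (x ⬝ᵥ x) ≤ x ⬝ᵥ (Q *ᵥ x) := by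
  have h0 := psd_quad h x
  rw [Matrix.sub_mulVec, Matrix.smul_mulVec, Matrix.one_mulVec, dotProduct_sub,
    dotProduct_smul, smul_eq_mul] at h0
  linarith

lemma quad_upper_of_psd {Q : Matrix (Fin T) (Fin T) ℝ} {c : ℝ}
    (h : (c • (1 : Matrix (Fin T) (Fin T) ℝ) - Q).PosSemidef) (x : Fin T → ℝ) :
    x ⬝ᵥ (Q *ᵥ x) ≤ c * (x ⬝ᵥ x) := by
  have h0 := psd_quad h x
  rw [Matrix.sub_mulVec, Matrix.smul_mulVec, Matrix.one_mulVec, dotProduct_sub,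
    dotProduct_smul, smul_eq_mul] at h0
  linarith

lemma posdef_of_lower {Q : Matrix (Fin T) (Fin T) ℝ} (hherm : Q.IsHermitian) {c : ℝ}
    (hc : 0 < c) (hlow : ∀ x, c * (x ⬝ᵥ x) ≤ x ⬝ᵥ (Q *ᵥ x)) : Q.PosDef := by
  refine Matrix.PosDef.of_dotProduct_mulVec_pos hherm fun x hx => ?_
  have h1 : x ⬝ᵥ x ≠ 0 := fun h => hx (dotProduct_self_eq_zero.mp h)
  have h2 : 0 < x ⬝ᵥ x := lt_of_le_of_ne (dot_self_nonneg x) (Ne.symm h1)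
  have := hlow x
  have hfin : 0 < x ⬝ᵥ (Q *ᵥ x) := lt_of_lt_of_le (by positivity) this
  simpa using hfin

lemma qe_inv_mulVec_le {Q : Matrix (Fin T) (Fin T) ℝ} (hQ : Q.PosDef) {c : ℝ} (hc : 0 < c)
    (hlow : ∀ x, c * (x ⬝ᵥ x) ≤ x ⬝ᵥ (Q *ᵥ x)) (v : Fin T → ℝ) :
    qe (Q⁻¹ *ᵥ v) ≤ c⁻¹ * qe v := by
  set y := Q⁻¹ *ᵥ v with hy
  have hdet : IsUnit Q.det := (Matrix.isUnit_iff_isUnit_det Q).mp hQ.isUnit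
  have hQy : Q *ᵥ y = v := by
    rw [hy, Matrix.mulVec_mulVec, Matrix.mul_nonsing_inv _ hdet, Matrix.one_mulVec]
  have h1 : c * qe y ^ 2 ≤ y ⬝ᵥ v := by
    have := hlow y
    rw [hQy] at this
    rwa [dot_self_eq] at this
  have h2 : y ⬝ᵥ v ≤ qe y * qe v := le_trans (le_abs_self _) (abs_dot_le y v)
  have hyn := qe_nonneg y
  have hvn := qe_nonneg v
  rcases eq_or_lt_of_le hyn with h0 | h0
  · rw [← h0]; positivity
  · have : c * qe y ≤ qe v := by nlinarith
    rw [← mul_le_mul_iff_right₀ hc, mul_inv_cancel_left₀ (ne_of_gt hc)]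
    exact this

lemma inv_quad_lower {Q : Matrix (Fin T) (Fin T) ℝ} (hQ : Q.PosDef) {Mc : ℝ} (hMc : 0 < Mc)
    (hup : ∀ x, x ⬝ᵥ (Q *ᵥ x) ≤ Mc * (x ⬝ᵥ x)) (x : Fin T → ℝ) :
    Mc⁻¹ * (x ⬝ᵥ x) ≤ x ⬝ᵥ (Q⁻¹ *ᵥ x) := by
  set y := Q⁻¹ *ᵥ x with hy
  have hdet : IsUnit Q.det := (Matrix.isUnit_iff_isUnit_det Q).mp hQ.isUnit
  have hQy : Q *ᵥ y = x := by
    rw [hy, Matrix.mulVec_mulVec, Matrix.mul_nonsing_inv _ hdet, Matrix.one_mulVec]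
  have hcs := cs_psd hQ.posSemidef x y
  rw [hQy] at hcs
  -- hcs : (x ⬝ᵥ x)^2 ≤ (x ⬝ᵥ Q *ᵥ x) * (y ⬝ᵥ x)
  have hyx : y ⬝ᵥ x = x ⬝ᵥ (Q⁻¹ *ᵥ x) := by rw [dotProduct_comm, hy]
  rw [hyx] at hcs
  have hup' := hup x
  have hq0 : 0 ≤ x ⬝ᵥ (Q⁻¹ *ᵥ x) := psd_quad hQ.inv.posSemidef x
  have hx0 : 0 ≤ x ⬝ᵥ x := dot_self_nonneg x
  rcases eq_or_lt_of_le hx0 with h0 | h0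
  · rw [← h0]; simpa using hq0
  · have h3 : x ⬝ᵥ x ≤ Mc * (x ⬝ᵥ (Q⁻¹ *ᵥ x)) := by nlinarith
    rw [inv_mul_le_iff₀ hMc]
    linarith


lemma closed_form {m : ℝ} (hm : 0 < m)
    (W : ℕ → Matrix (Fin T) (Fin T) ℝ) (V : ℕ → Fin T → ℝ)
    (s : Finset ℕ)
    (hWt : ∀ i ∈ s, (W i)ᵀ = W i)
    (hWdet : ∀ i ∈ s, IsUnit (W i).det)
    (hWneg : ∀ i ∈ s, ∀ d : Fin T → ℝ, d ⬝ᵥ (W i *ᵥ d) ≤ -(m * (d ⬝ᵥ d)))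
    (X : ℕ → Fin T → ℝ) (hfeas : ∑ j ∈ s, X j = 0)
    (hopt : ∀ v : ℕ → Fin T → ℝ, ∑ j ∈ s, v j = 0 →
      ∑ j ∈ s, (v j ⬝ᵥ (W j *ᵥ v j) + V j ⬝ᵥ v j) ≤
        ∑ j ∈ s, (X j ⬝ᵥ (W j *ᵥ X j) + V j ⬝ᵥ X j))
    (r : Fin T → ℝ) (hr : ∑ j ∈ s, (W j)⁻¹ *ᵥ (r - V j) = 0) :
    ∀ i ∈ s, X i = (2:ℝ)⁻¹ • ((W i)⁻¹ *ᵥ (r - V i)) := by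
  set ω : ℕ → Fin T → ℝ := fun j => (2:ℝ)⁻¹ • ((W j)⁻¹ *ᵥ (r - V j)) with hωdef
  have hωsum : ∑ j ∈ s, ω j = 0 := by
    rw [hωdef, ← Finset.smul_sum, hr, smul_zero]
  have hWω : ∀ j ∈ s, W j *ᵥ ω j = (2:ℝ)⁻¹ • (r - V j) := by
    intro j hj
    rw [hωdef]
    simp only
    rw [Matrix.mulVec_smul, Matrix.mulVec_mulVec, Matrix.mul_nonsing_inv _ (hWdet j hj),
      Matrix.one_mulVec]
  have gap : ∀ v : ℕ → Fin T → ℝ, ∑ j ∈ s, v j = 0 →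
      ∑ j ∈ s, (v j ⬝ᵥ (W j *ᵥ v j) + V j ⬝ᵥ v j)
        = ∑ j ∈ s, (ω j ⬝ᵥ (W j *ᵥ ω j) + V j ⬝ᵥ ω j)
          + ∑ j ∈ s, ((v j - ω j) ⬝ᵥ (W j *ᵥ (v j - ω j))) := by
    intro v hv
    have per : ∀ j ∈ s, v j ⬝ᵥ (W j *ᵥ v j) + V j ⬝ᵥ v j
        = (ω j ⬝ᵥ (W j *ᵥ ω j) + V j ⬝ᵥ ω j)
          + (v j - ω j) ⬝ᵥ (W j *ᵥ (v j - ω j)) + r ⬝ᵥ (v j - ω j) := by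
      intro j hj
      have hsymj : (W j)ᵀ = W j := hWt j hj
      have hvω : v j ⬝ᵥ (W j *ᵥ ω j) = ω j ⬝ᵥ (W j *ᵥ v j) := symm_dot hsymj _ _
      have hWωj := hWω j hj
      have hωWv : ω j ⬝ᵥ (W j *ᵥ v j) = (2:ℝ)⁻¹ * ((r - V j) ⬝ᵥ v j) := by
        rw [← symm_dot hsymj, hWωj, dotProduct_smul, smul_eq_mul, dotProduct_comm]
      have hωWω : ω j ⬝ᵥ (W j *ᵥ ω j) = (2:ℝ)⁻¹ * ((r - V j) ⬝ᵥ ω j) := by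
        rw [hWωj, dotProduct_smul, smul_eq_mul, dotProduct_comm]
      rw [Matrix.mulVec_sub, dotProduct_sub, sub_dotProduct, sub_dotProduct,
        hvω, hωWv, hωWω]
      simp only [sub_dotProduct, dotProduct_sub]
      ring
    rw [Finset.sum_congr rfl per, Finset.sum_add_distrib, Finset.sum_add_distrib]
    have hz : ∑ j ∈ s, r ⬝ᵥ (v j - ω j) = 0 := by
      rw [← dot_sum, Finset.sum_sub_distrib, hv, hωsum, sub_zero, dotProduct_zero]
    rw [hz, add_zero]
  have hopt' := hopt ω hωsum
  have hgap := gap X hfeas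
  have hQ0 : 0 ≤ ∑ j ∈ s, ((X j - ω j) ⬝ᵥ (W j *ᵥ (X j - ω j))) := by linarith
  have hsum_le : ∑ j ∈ s, ((X j - ω j) ⬝ᵥ (W j *ᵥ (X j - ω j)))
      ≤ ∑ j ∈ s, -(m * ((X j - ω j) ⬝ᵥ (X j - ω j))) :=
    Finset.sum_le_sum fun j hj => hWneg j hj _
  have hkey : ∑ j ∈ s, m * ((X j - ω j) ⬝ᵥ (X j - ω j)) ≤ 0 := by
    have : ∑ j ∈ s, -(m * ((X j - ω j) ⬝ᵥ (X j - ω j)))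
        = -∑ j ∈ s, m * ((X j - ω j) ⬝ᵥ (X j - ω j)) := by
      rw [Finset.sum_neg_distrib]
    linarith
  have hnn : ∀ j ∈ s, 0 ≤ m * ((X j - ω j) ⬝ᵥ (X j - ω j)) :=
    fun j _ => mul_nonneg hm.le (dot_self_nonneg _)
  have hzero := (Finset.sum_eq_zero_iff_of_nonneg hnn).mp
    (le_antisymm hkey (Finset.sum_nonneg hnn))
  intro i hi
  have hdd : (X i - ω i) ⬝ᵥ (X i - ω i) = 0 := by
    have := hzero i hi
    exact (mul_eq_zero.mp this).resolve_left (ne_of_gt hm)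
  have hd0 : X i - ω i = 0 := dotProduct_self_eq_zero.mp hdd
  have := sub_eq_zero.mp hd0
  rw [this, hωdef]

lemma value_closed {Q : Matrix (Fin T) (Fin T) ℝ} (hQt : Qᵀ = Q) (hQdet : IsUnit Q.det)
    (r V1 : Fin T → ℝ) :
    ((2:ℝ)⁻¹ • (Q⁻¹ *ᵥ (r - V1))) ⬝ᵥ (Q *ᵥ ((2:ℝ)⁻¹ • (Q⁻¹ *ᵥ (r - V1))))
      + V1 ⬝ᵥ ((2:ℝ)⁻¹ • (Q⁻¹ *ᵥ (r - V1)))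
    = (4:ℝ)⁻¹ * (r ⬝ᵥ (Q⁻¹ *ᵥ r)) - (4:ℝ)⁻¹ * (V1 ⬝ᵥ (Q⁻¹ *ᵥ V1)) := by
  have hUt : (Q⁻¹)ᵀ = Q⁻¹ := by rw [Matrix.transpose_nonsing_inv, hQt]
  have hQx : Q *ᵥ ((2:ℝ)⁻¹ • (Q⁻¹ *ᵥ (r - V1))) = (2:ℝ)⁻¹ • (r - V1) := by
    rw [Matrix.mulVec_smul, Matrix.mulVec_mulVec, Matrix.mul_nonsing_inv _ hQdet,
      Matrix.one_mulVec]
  rw [hQx]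
  have hc : r ⬝ᵥ (Q⁻¹ *ᵥ V1) = V1 ⬝ᵥ (Q⁻¹ *ᵥ r) := symm_dot hUt r V1
  rw [smul_dotProduct, dotProduct_smul, dotProduct_smul]
  simp only [smul_eq_mul, Matrix.mulVec_sub, dotProduct_sub, sub_dotProduct,
    dot_expand hUt]
  ring_nf
  linarith [hc]


lemma key_bound
    (m M vbar : ℝ) (hm : 0 < m) (hmM : m ≤ M) (hvbar : 0 < vbar)
    (W : ℕ → Matrix (Fin T) (Fin T) ℝ) (V : ℕ → Fin T → ℝ)
    (hWsymm : ∀ i : ℕ, 1 ≤ i → (W i).IsSymm)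
    (hWlo : ∀ i : ℕ, 1 ≤ i →
      (W i + M • (1 : Matrix (Fin T) (Fin T) ℝ)).PosSemidef)
    (hWhi : ∀ i : ℕ, 1 ≤ i →
      (-(m • (1 : Matrix (Fin T) (Fin T) ℝ)) - W i).PosSemidef)
    (hV : ∀ i : ℕ, 1 ≤ i → ‖V i‖ ≤ vbar)
    (Ω Ψ : ℕ → ℕ → Fin T → ℝ)
    (hΩfeas : ∀ N : ℕ, 2 ≤ N → ∑ j ∈ Finset.Icc 1 N, Ω N j = 0)
    (hΩopt : ∀ N : ℕ, 2 ≤ N → ∀ v : ℕ → Fin T → ℝ,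
      ∑ j ∈ Finset.Icc 1 N, v j = 0 →
      ∑ j ∈ Finset.Icc 1 N, (v j ⬝ᵥ (W j *ᵥ v j) + V j ⬝ᵥ v j) ≤
        ∑ j ∈ Finset.Icc 1 N, (Ω N j ⬝ᵥ (W j *ᵥ Ω N j) + V j ⬝ᵥ Ω N j))
    (hΨfeas : ∀ N : ℕ, 2 ≤ N → ∑ j ∈ Finset.Icc 2 N, Ψ N j = 0)
    (hΨopt : ∀ N : ℕ, 2 ≤ N → ∀ v : ℕ → Fin T → ℝ,
      ∑ j ∈ Finset.Icc 2 N, v j = 0 →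
      ∑ j ∈ Finset.Icc 2 N, (v j ⬝ᵥ (W j *ᵥ v j) + V j ⬝ᵥ v j) ≤
        ∑ j ∈ Finset.Icc 2 N, (Ψ N j ⬝ᵥ (W j *ᵥ Ψ N j) + V j ⬝ᵥ Ψ N j))
    (Γ : ℕ → Matrix (Fin T) (Fin T) ℝ) (lam : ℕ → Fin T → ℝ) (p1 : ℕ → ℝ)
    (hΓ : ∀ N : ℕ, Γ N = (∑ i ∈ Finset.Icc 1 N, (W i)⁻¹)⁻¹)
    (hlam : ∀ N : ℕ, lam N = Γ N *ᵥ ∑ i ∈ Finset.Icc 1 N, (W i)⁻¹ *ᵥ V i)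
    (hp1 : ∀ N : ℕ, p1 N =
      (∑ i ∈ Finset.Icc 2 N, (Ψ N i ⬝ᵥ (W i *ᵥ Ψ N i) + V i ⬝ᵥ Ψ N i)) -
        ∑ i ∈ Finset.Icc 2 N, (Ω N i ⬝ᵥ (W i *ᵥ Ω N i) + V i ⬝ᵥ Ω N i))
    (N : ℕ) (hN : 2 ≤ N) :
    |lam N ⬝ᵥ Ω N 1 - p1 N| ≤
      M * (m⁻¹ * ((M / m) * (Real.sqrt T * vbar) + Real.sqrt T * vbar)) ^ 2 /
        (4 * ((N : ℝ) - 1)) := by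
  have hM0 : (0:ℝ) < M := lt_of_lt_of_le hm hmM
  have hN2R : (2:ℝ) ≤ (N:ℝ) := by exact_mod_cast hN
  have hNR : (0:ℝ) < (N:ℝ) := by linarith
  have hN1R : (0:ℝ) < (N:ℝ) - 1 := by linarith
  set P : ℕ → Matrix (Fin T) (Fin T) ℝ := fun i => -(W i) with hPdef
  have hWt : ∀ i : ℕ, 1 ≤ i → (W i)ᵀ = W i := fun i hi => hWsymm i hi
  have hPt : ∀ i : ℕ, 1 ≤ i → (P i)ᵀ = P i := by
    intro i hi
    rw [hPdef]
    simp only [Matrix.transpose_neg, hWt i hi]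
  have hPherm : ∀ i : ℕ, 1 ≤ i → (P i).IsHermitian := by
    intro i hi
    rw [Matrix.IsHermitian, Matrix.conjTranspose_eq_transpose_of_trivial]
    exact hPt i hi
  have hPlow : ∀ i : ℕ, 1 ≤ i → ∀ x, m * (x ⬝ᵥ x) ≤ x ⬝ᵥ (P i *ᵥ x) := by
    intro i hi x
    apply quad_lower_of_psd (c := m) ?_ x
    have heq : P i - m • (1 : Matrix (Fin T) (Fin T) ℝ)
        = -(m • (1 : Matrix (Fin T) (Fin T) ℝ)) - W i := by
      rw [hPdef]; abel
    rw [heq]; exact hWhi i hi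
  have hPup : ∀ i : ℕ, 1 ≤ i → ∀ x, x ⬝ᵥ (P i *ᵥ x) ≤ M * (x ⬝ᵥ x) := by
    intro i hi x
    apply quad_upper_of_psd (c := M) ?_ x
    have heq : M • (1 : Matrix (Fin T) (Fin T) ℝ) - P i
        = W i + M • (1 : Matrix (Fin T) (Fin T) ℝ) := by
      rw [hPdef]; rw [sub_neg_eq_add, add_comm]
    rw [heq]; exact hWlo i hi
  have hPdefin : ∀ i : ℕ, 1 ≤ i → (P i).PosDef :=
    fun i hi => posdef_of_lower (hPherm i hi) hm (hPlow i hi)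
  have hPdet : ∀ i : ℕ, 1 ≤ i → IsUnit (P i).det :=
    fun i hi => (Matrix.isUnit_iff_isUnit_det _).mp (hPdefin i hi).isUnit
  have hWdet : ∀ i : ℕ, 1 ≤ i → IsUnit (W i).det := by
    intro i hi
    have h1 : IsUnit (-(P i)) := (hPdefin i hi).isUnit.neg
    rw [hPdef, neg_neg] at h1
    exact (Matrix.isUnit_iff_isUnit_det _).mp h1
  have hWinv : ∀ i : ℕ, 1 ≤ i → (W i)⁻¹ = -((P i)⁻¹) := by
    intro i hi
    apply Matrix.inv_eq_right_inv
    have h1 : W i * -((P i)⁻¹) = P i * (P i)⁻¹ := by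
      rw [hPdef]; simp [Matrix.mul_neg, Matrix.neg_mul]
    rw [h1, Matrix.mul_nonsing_inv _ (hPdet i hi)]
  have hWneg : ∀ i : ℕ, 1 ≤ i → ∀ d, d ⬝ᵥ (W i *ᵥ d) ≤ -(m * (d ⬝ᵥ d)) := by
    intro i hi d
    have h := hPlow i hi d
    have hW : W i = -(P i) := by rw [hPdef, neg_neg]
    rw [hW, Matrix.neg_mulVec, dotProduct_neg]
    linarith
  have hqeW : ∀ i : ℕ, 1 ≤ i → ∀ v, qe ((W i)⁻¹ *ᵥ v) ≤ m⁻¹ * qe v := by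
    intro i hi v
    rw [hWinv i hi, Matrix.neg_mulVec, qe_neg]
    exact qe_inv_mulVec_le (hPdefin i hi) hm (hPlow i hi) v
  have hqeV : ∀ i : ℕ, 1 ≤ i → qe (V i) ≤ Real.sqrt T * vbar := by
    intro i hi
    apply qe_sup_bound _ hvbar.le
    intro j
    have h1 := norm_le_pi_norm (V i) j
    rw [Real.norm_eq_abs] at h1
    linarith [hV i hi]
  have mem1 : ∀ i ∈ Finset.Icc 1 N, 1 ≤ i := fun i hi => (Finset.mem_Icc.mp hi).1
  have mem2 : ∀ i ∈ Finset.Icc 2 N, 1 ≤ i :=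
    fun i hi => le_trans one_le_two (Finset.mem_Icc.mp hi).1
  set A := ∑ i ∈ Finset.Icc 1 N, (W i)⁻¹ with hAdef
  set B := ∑ i ∈ Finset.Icc 2 N, (W i)⁻¹ with hBdef
  set D := ∑ i ∈ Finset.Icc 1 N, (P i)⁻¹ with hDdef
  set Cm := ∑ i ∈ Finset.Icc 2 N, (P i)⁻¹ with hCmdef
  set av := ∑ i ∈ Finset.Icc 1 N, (W i)⁻¹ *ᵥ V i with havdef
  set bv := ∑ i ∈ Finset.Icc 2 N, (W i)⁻¹ *ᵥ V i with hbvdef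
  have hAD : A = -D := by
    rw [hAdef, hDdef, ← Finset.sum_neg_distrib]
    exact Finset.sum_congr rfl fun i hi => hWinv i (mem1 i hi)
  have hBC : B = -Cm := by
    rw [hBdef, hCmdef, ← Finset.sum_neg_distrib]
    exact Finset.sum_congr rfl fun i hi => hWinv i (mem2 i hi)
  have hcard1 : (Finset.Icc 1 N).card = N := by rw [Nat.card_Icc]; omega
  have hcard2 : ((Finset.Icc 2 N).card : ℝ) = (N : ℝ) - 1 := by
    rw [Nat.card_Icc]
    have : N + 1 - 2 = N - 1 := by omega
    rw [this]
    have h1 : 1 ≤ N := by omega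
    push_cast [Nat.cast_sub h1]
    ring
  have hDlow : ∀ x, ((N:ℝ)/M) * (x ⬝ᵥ x) ≤ x ⬝ᵥ (D *ᵥ x) := by
    intro x
    rw [hDdef, sum_mulVec', dot_sum]
    have hterm : ∀ i ∈ Finset.Icc 1 N, M⁻¹ * (x ⬝ᵥ x) ≤ x ⬝ᵥ ((P i)⁻¹ *ᵥ x) :=
      fun i hi => inv_quad_lower (hPdefin i (mem1 i hi)) hM0 (hPup i (mem1 i hi)) x
    have h2 := Finset.sum_le_sum hterm
    rw [Finset.sum_const, hcard1, nsmul_eq_mul] at h2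
    have : ((N:ℝ)/M) * (x ⬝ᵥ x) = (N:ℝ) * (M⁻¹ * (x ⬝ᵥ x)) := by
      rw [div_eq_mul_inv]; ring
    rw [this]
    exact h2
  have hClow : ∀ x, (((N:ℝ) - 1)/M) * (x ⬝ᵥ x) ≤ x ⬝ᵥ (Cm *ᵥ x) := by
    intro x
    rw [hCmdef, sum_mulVec', dot_sum]
    have hterm : ∀ i ∈ Finset.Icc 2 N, M⁻¹ * (x ⬝ᵥ x) ≤ x ⬝ᵥ ((P i)⁻¹ *ᵥ x) :=
      fun i hi => inv_quad_lower (hPdefin i (mem2 i hi)) hM0 (hPup i (mem2 i hi)) x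
    have h2 := Finset.sum_le_sum hterm
    rw [Finset.sum_const, nsmul_eq_mul, hcard2] at h2
    have : (((N:ℝ) - 1)/M) * (x ⬝ᵥ x) = ((N:ℝ) - 1) * (M⁻¹ * (x ⬝ᵥ x)) := by
      rw [div_eq_mul_inv]; ring
    rw [this]
    exact h2
  have hDherm : D.IsHermitian := by
    rw [Matrix.IsHermitian, Matrix.conjTranspose_eq_transpose_of_trivial, hDdef,
      Matrix.transpose_sum]
    exact Finset.sum_congr rfl fun i hi => by
      rw [Matrix.transpose_nonsing_inv, hPt i (mem1 i hi)]
  have hCherm : Cm.IsHermitian := by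
    rw [Matrix.IsHermitian, Matrix.conjTranspose_eq_transpose_of_trivial, hCmdef,
      Matrix.transpose_sum]
    exact Finset.sum_congr rfl fun i hi => by
      rw [Matrix.transpose_nonsing_inv, hPt i (mem2 i hi)]
  have hDposdef : D.PosDef := posdef_of_lower hDherm (div_pos hNR hM0) hDlow
  have hCposdef : Cm.PosDef := posdef_of_lower hCherm (div_pos hN1R hM0) hClow
  have hDdet : IsUnit D.det := (Matrix.isUnit_iff_isUnit_det _).mp hDposdef.isUnit
  have hCdet : IsUnit Cm.det := (Matrix.isUnit_iff_isUnit_det _).mp hCposdef.isUnit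
  have hAdet : IsUnit A.det := by
    rw [hAD]
    exact (Matrix.isUnit_iff_isUnit_det _).mp hDposdef.isUnit.neg
  have hBdet : IsUnit B.det := by
    rw [hBC]
    exact (Matrix.isUnit_iff_isUnit_det _).mp hCposdef.isUnit.neg
  have hAinv : A⁻¹ = -(D⁻¹) := by
    apply Matrix.inv_eq_right_inv
    rw [hAD, Matrix.neg_mul, Matrix.mul_neg, neg_neg, Matrix.mul_nonsing_inv _ hDdet]
  have hBinv : B⁻¹ = -(Cm⁻¹) := by
    apply Matrix.inv_eq_right_inv
    rw [hBC, Matrix.neg_mul, Matrix.mul_neg, neg_neg, Matrix.mul_nonsing_inv _ hCdet]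
  set r := lam N with hrdef
  have hr_eq : r = A⁻¹ *ᵥ av := by rw [hrdef, hlam N, hΓ N]
  have hAr : A *ᵥ r = av := by
    rw [hr_eq, Matrix.mulVec_mulVec, Matrix.mul_nonsing_inv _ hAdet, Matrix.one_mulVec]
  set sv := B⁻¹ *ᵥ bv with hsvdef
  have hBs : B *ᵥ sv = bv := by
    rw [hsvdef, Matrix.mulVec_mulVec, Matrix.mul_nonsing_inv _ hBdet, Matrix.one_mulVec]
  have hrsum : ∑ j ∈ Finset.Icc 1 N, (W j)⁻¹ *ᵥ (r - V j) = 0 := by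
    have hsplit : ∀ j ∈ Finset.Icc 1 N,
        (W j)⁻¹ *ᵥ (r - V j) = (W j)⁻¹ *ᵥ r - (W j)⁻¹ *ᵥ V j :=
      fun j _ => Matrix.mulVec_sub _ _ _
    rw [Finset.sum_congr rfl hsplit, Finset.sum_sub_distrib, ← sum_mulVec', ← hAdef,
      ← havdef, hAr, sub_self]
  have hΩcf := closed_form hm W V (Finset.Icc 1 N)
    (fun i hi => hWt i (mem1 i hi)) (fun i hi => hWdet i (mem1 i hi))
    (fun i hi => hWneg i (mem1 i hi)) (Ω N) (hΩfeas N hN) (hΩopt N hN) r hrsum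
  have hssum : ∑ j ∈ Finset.Icc 2 N, (W j)⁻¹ *ᵥ (sv - V j) = 0 := by
    have hsplit : ∀ j ∈ Finset.Icc 2 N,
        (W j)⁻¹ *ᵥ (sv - V j) = (W j)⁻¹ *ᵥ sv - (W j)⁻¹ *ᵥ V j :=
      fun j _ => Matrix.mulVec_sub _ _ _
    rw [Finset.sum_congr rfl hsplit, Finset.sum_sub_distrib, ← sum_mulVec', ← hBdef,
      ← hbvdef, hBs, sub_self]
  have hΨcf := closed_form hm W V (Finset.Icc 2 N)
    (fun i hi => hWt i (mem2 i hi)) (fun i hi => hWdet i (mem2 i hi))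
    (fun i hi => hWneg i (mem2 i hi)) (Ψ N) (hΨfeas N hN) (hΨopt N hN) sv hssum
  have hSΩ : ∑ i ∈ Finset.Icc 2 N, (Ω N i ⬝ᵥ (W i *ᵥ Ω N i) + V i ⬝ᵥ Ω N i)
      = (4:ℝ)⁻¹ * (r ⬝ᵥ (B *ᵥ r))
        - (4:ℝ)⁻¹ * ∑ i ∈ Finset.Icc 2 N, (V i ⬝ᵥ ((W i)⁻¹ *ᵥ V i)) := by
    have hterm : ∀ i ∈ Finset.Icc 2 N, Ω N i ⬝ᵥ (W i *ᵥ Ω N i) + V i ⬝ᵥ Ω N i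
        = (4:ℝ)⁻¹ * (r ⬝ᵥ ((W i)⁻¹ *ᵥ r)) - (4:ℝ)⁻¹ * (V i ⬝ᵥ ((W i)⁻¹ *ᵥ V i)) := by
      intro i hi
      have hmem1 : i ∈ Finset.Icc 1 N := by
        simp only [Finset.mem_Icc] at hi ⊢
        omega
      rw [hΩcf i hmem1]
      exact value_closed (hWt i (mem2 i hi)) (hWdet i (mem2 i hi)) r (V i)
    rw [Finset.sum_congr rfl hterm, Finset.sum_sub_distrib, ← Finset.mul_sum,
      ← Finset.mul_sum, ← dot_sum, ← sum_mulVec', ← hBdef]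
  have hSΨ : ∑ i ∈ Finset.Icc 2 N, (Ψ N i ⬝ᵥ (W i *ᵥ Ψ N i) + V i ⬝ᵥ Ψ N i)
      = (4:ℝ)⁻¹ * (sv ⬝ᵥ (B *ᵥ sv))
        - (4:ℝ)⁻¹ * ∑ i ∈ Finset.Icc 2 N, (V i ⬝ᵥ ((W i)⁻¹ *ᵥ V i)) := by
    have hterm : ∀ i ∈ Finset.Icc 2 N, Ψ N i ⬝ᵥ (W i *ᵥ Ψ N i) + V i ⬝ᵥ Ψ N i
        = (4:ℝ)⁻¹ * (sv ⬝ᵥ ((W i)⁻¹ *ᵥ sv)) - (4:ℝ)⁻¹ * (V i ⬝ᵥ ((W i)⁻¹ *ᵥ V i)) := by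
      intro i hi
      rw [hΨcf i hi]
      exact value_closed (hWt i (mem2 i hi)) (hWdet i (mem2 i hi)) sv (V i)
    rw [Finset.sum_congr rfl hterm, Finset.sum_sub_distrib, ← Finset.mul_sum,
      ← Finset.mul_sum, ← dot_sum, ← sum_mulVec', ← hBdef]
  have hp : p1 N = (4:ℝ)⁻¹ * (sv ⬝ᵥ (B *ᵥ sv)) - (4:ℝ)⁻¹ * (r ⬝ᵥ (B *ᵥ r)) := by
    rw [hp1 N, hSΩ, hSΨ]
    ring
  have hIccsplit : Finset.Icc 1 N = insert 1 (Finset.Icc 2 N) := by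
    ext x
    simp only [Finset.mem_Icc, Finset.mem_insert]
    omega
  have hnotmem : (1:ℕ) ∉ Finset.Icc 2 N := by simp
  set u1 := (W 1)⁻¹ with hu1def
  have hAsplit : A = u1 + B := by
    rw [hAdef, hBdef, hIccsplit, Finset.sum_insert hnotmem]
  have havsplit : av = u1 *ᵥ V 1 + bv := by
    rw [havdef, hbvdef, hIccsplit, Finset.sum_insert hnotmem]
  set w := u1 *ᵥ (r - V 1) with hwdef
  have hBr : B *ᵥ r = av - u1 *ᵥ r := by
    have h1 := hAr
    rw [hAsplit, Matrix.add_mulVec] at h1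
    rw [← h1]
    abel
  have hBsr : B *ᵥ (sv - r) = w := by
    rw [Matrix.mulVec_sub, hBs, hBr, havsplit, hwdef, Matrix.mulVec_sub]
    abel
  have hsr : sv - r = B⁻¹ *ᵥ w := by
    rw [← hBsr, Matrix.mulVec_mulVec, Matrix.nonsing_inv_mul _ hBdet, Matrix.one_mulVec]
  have hBsymm : Bᵀ = B := by
    rw [hBdef, Matrix.transpose_sum]
    exact Finset.sum_congr rfl fun i hi => by
      rw [Matrix.transpose_nonsing_inv, hWt i (mem2 i hi)]
  have hBinvt : (B⁻¹)ᵀ = B⁻¹ := by rw [Matrix.transpose_nonsing_inv, hBsymm]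
  have hdiff : sv ⬝ᵥ (B *ᵥ sv) - r ⬝ᵥ (B *ᵥ r) = w ⬝ᵥ sv + w ⬝ᵥ r := by
    have hc : r ⬝ᵥ (B *ᵥ sv) = sv ⬝ᵥ (B *ᵥ r) := symm_dot hBsymm r sv
    have h2 : (sv - r) ⬝ᵥ (B *ᵥ sv) = w ⬝ᵥ sv := by
      rw [hsr, dot_expand hBinvt, Matrix.mulVec_mulVec, Matrix.nonsing_inv_mul _ hBdet,
        Matrix.one_mulVec]
    have h3 : (sv - r) ⬝ᵥ (B *ᵥ r) = w ⬝ᵥ r := by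
      rw [hsr, dot_expand hBinvt, Matrix.mulVec_mulVec, Matrix.nonsing_inv_mul _ hBdet,
        Matrix.one_mulVec]
    rw [sub_dotProduct] at h2 h3
    linarith
  have h1mem : (1:ℕ) ∈ Finset.Icc 1 N := by
    simp only [Finset.mem_Icc]
    omega
  have hΩ1 : Ω N 1 = (2:ℝ)⁻¹ • (u1 *ᵥ (r - V 1)) := hΩcf 1 h1mem
  have hE : lam N ⬝ᵥ Ω N 1 - p1 N = (4:ℝ)⁻¹ * (w ⬝ᵥ (r - sv)) := by
    rw [← hrdef, hΩ1, hp, dotProduct_smul, smul_eq_mul, ← hwdef, dotProduct_sub]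
    have hrw : r ⬝ᵥ w = w ⬝ᵥ r := dotProduct_comm _ _
    linarith [hdiff, hrw]
  have hrs : r - sv = Cm⁻¹ *ᵥ w := by
    rw [← neg_sub sv r, hsr, hBinv, Matrix.neg_mulVec, neg_neg]
  have hqe_rs : qe (r - sv) ≤ (((N:ℝ) - 1)/M)⁻¹ * qe w := by
    rw [hrs]
    exact qe_inv_mulVec_le hCposdef (div_pos hN1R hM0) hClow w
  set K := m⁻¹ * ((M / m) * (Real.sqrt T * vbar) + Real.sqrt T * vbar) with hKdef
  have hqew : qe w ≤ K := by
    have h1 : qe w ≤ m⁻¹ * qe (r - V 1) := by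
      rw [hwdef, hu1def]
      exact hqeW 1 le_rfl _
    have h2 : qe (r - V 1) ≤ qe r + qe (V 1) := qe_sub_le _ _
    have h3 : qe (V 1) ≤ Real.sqrt T * vbar := hqeV 1 le_rfl
    have h4 : qe r ≤ (M / m) * (Real.sqrt T * vbar) := by
      have hr2 : r = -(D⁻¹ *ᵥ av) := by rw [hr_eq, hAinv, Matrix.neg_mulVec]
      rw [hr2, qe_neg]
      have h5 : qe (D⁻¹ *ᵥ av) ≤ ((N:ℝ)/M)⁻¹ * qe av :=
        qe_inv_mulVec_le hDposdef (div_pos hNR hM0) hDlow av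
      have h6 : qe av ≤ (N:ℝ) * (m⁻¹ * (Real.sqrt T * vbar)) := by
        rw [havdef]
        calc qe (∑ i ∈ Finset.Icc 1 N, (W i)⁻¹ *ᵥ V i)
            ≤ ∑ i ∈ Finset.Icc 1 N, qe ((W i)⁻¹ *ᵥ V i) := qe_sum_le _ _
          _ ≤ ∑ _i ∈ Finset.Icc 1 N, m⁻¹ * (Real.sqrt T * vbar) := by
              refine Finset.sum_le_sum fun i hi => ?_
              refine le_trans (hqeW i (mem1 i hi) (V i)) ?_
              exact mul_le_mul_of_nonneg_left (hqeV i (mem1 i hi)) (inv_nonneg.mpr hm.le)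
          _ = (N:ℝ) * (m⁻¹ * (Real.sqrt T * vbar)) := by
              rw [Finset.sum_const, hcard1, nsmul_eq_mul]
      calc qe (D⁻¹ *ᵥ av) ≤ ((N:ℝ)/M)⁻¹ * qe av := h5
        _ ≤ ((N:ℝ)/M)⁻¹ * ((N:ℝ) * (m⁻¹ * (Real.sqrt T * vbar))) := by
            refine mul_le_mul_of_nonneg_left h6 ?_
            positivity
        _ = (M / m) * (Real.sqrt T * vbar) := by
            rw [inv_div]
            field_simp
    calc qe w ≤ m⁻¹ * qe (r - V 1) := h1
      _ ≤ m⁻¹ * (qe r + qe (V 1)) :=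
          mul_le_mul_of_nonneg_left h2 (inv_nonneg.mpr hm.le)
      _ ≤ K := by
          rw [hKdef]
          exact mul_le_mul_of_nonneg_left (add_le_add h4 h3) (inv_nonneg.mpr hm.le)
  have hK0 : 0 ≤ K := le_trans (qe_nonneg w) hqew
  rw [hE, abs_mul]
  have habs4 : |(4:ℝ)⁻¹| = (4:ℝ)⁻¹ := by norm_num
  have habs : |w ⬝ᵥ (r - sv)| ≤ K * ((((N:ℝ) - 1)/M)⁻¹ * K) := by
    calc |w ⬝ᵥ (r - sv)| ≤ qe w * qe (r - sv) := abs_dot_le _ _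
      _ ≤ K * ((((N:ℝ) - 1)/M)⁻¹ * K) := by
          refine mul_le_mul hqew (le_trans hqe_rs ?_) (qe_nonneg _) hK0
          refine mul_le_mul_of_nonneg_left hqew ?_
          positivity
  rw [habs4]
  calc (4:ℝ)⁻¹ * |w ⬝ᵥ (r - sv)| ≤ (4:ℝ)⁻¹ * (K * ((((N:ℝ) - 1)/M)⁻¹ * K)) := by
        exact mul_le_mul_of_nonneg_left habs (by norm_num)
    _ = M * K ^ 2 / (4 * ((N:ℝ) - 1)) := by
        rw [inv_div]
        field_simp

end VCGAux

/-- **Theorem 4, part 2 (block-quadratic form).** For agents with quadratic utilities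
`ΩᵢᵀWᵢΩᵢ + VᵢᵀΩᵢ` over a horizon `T`, symmetric uniformly bounded negative definite
`Wᵢ` and bounded `Vᵢ`, the VCG payment `p₁(N)` of agent `1` converges to its Lagrange
payment `λ*(N)ᵀΩ*₁(N)` as the number of agents grows, where
`λ*(N) = (Σᵢ Wᵢ⁻¹)⁻¹ · Σᵢ Wᵢ⁻¹Vᵢ` collects the Lagrange multipliers of the balance
constraint. -/
theorem vcg_payment_tendsto_lagrange_payment_dynamic
    (T : ℕ) (hT : 1 ≤ T)
    (m M vbar : ℝ) (hm : 0 < m) (hmM : m ≤ M) (hvbar : 0 < vbar)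
    (W : ℕ → Matrix (Fin T) (Fin T) ℝ) (V : ℕ → Fin T → ℝ)
    (hWsymm : ∀ i : ℕ, 1 ≤ i → (W i).IsSymm)
    (hWlo : ∀ i : ℕ, 1 ≤ i →
      (W i + M • (1 : Matrix (Fin T) (Fin T) ℝ)).PosSemidef)
    (hWhi : ∀ i : ℕ, 1 ≤ i →
      (-(m • (1 : Matrix (Fin T) (Fin T) ℝ)) - W i).PosSemidef)
    (hV : ∀ i : ℕ, 1 ≤ i → ‖V i‖ ≤ vbar)
    (Ω Ψ : ℕ → ℕ → Fin T → ℝ)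
    (hΩfeas : ∀ N : ℕ, 2 ≤ N → ∑ j ∈ Finset.Icc 1 N, Ω N j = 0)
    (hΩopt : ∀ N : ℕ, 2 ≤ N → ∀ v : ℕ → Fin T → ℝ,
      ∑ j ∈ Finset.Icc 1 N, v j = 0 →
      ∑ j ∈ Finset.Icc 1 N, (v j ⬝ᵥ (W j *ᵥ v j) + V j ⬝ᵥ v j) ≤
        ∑ j ∈ Finset.Icc 1 N, (Ω N j ⬝ᵥ (W j *ᵥ Ω N j) + V j ⬝ᵥ Ω N j))
    (hΨfeas : ∀ N : ℕ, 2 ≤ N → ∑ j ∈ Finset.Icc 2 N, Ψ N j = 0)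
    (hΨopt : ∀ N : ℕ, 2 ≤ N → ∀ v : ℕ → Fin T → ℝ,
      ∑ j ∈ Finset.Icc 2 N, v j = 0 →
      ∑ j ∈ Finset.Icc 2 N, (v j ⬝ᵥ (W j *ᵥ v j) + V j ⬝ᵥ v j) ≤
        ∑ j ∈ Finset.Icc 2 N, (Ψ N j ⬝ᵥ (W j *ᵥ Ψ N j) + V j ⬝ᵥ Ψ N j))
    (Γ : ℕ → Matrix (Fin T) (Fin T) ℝ) (lam : ℕ → Fin T → ℝ) (p1 : ℕ → ℝ)
    (hΓ : ∀ N : ℕ, Γ N = (∑ i ∈ Finset.Icc 1 N, (W i)⁻¹)⁻¹)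
    (hlam : ∀ N : ℕ, lam N = Γ N *ᵥ ∑ i ∈ Finset.Icc 1 N, (W i)⁻¹ *ᵥ V i)
    (hp1 : ∀ N : ℕ, p1 N =
      (∑ i ∈ Finset.Icc 2 N, (Ψ N i ⬝ᵥ (W i *ᵥ Ψ N i) + V i ⬝ᵥ Ψ N i)) -
        ∑ i ∈ Finset.Icc 2 N, (Ω N i ⬝ᵥ (W i *ᵥ Ω N i) + V i ⬝ᵥ Ω N i)) :
    Tendsto (fun N : ℕ => lam N ⬝ᵥ Ω N 1 - p1 N) atTop (nhds 0) := by
  set Cb : ℝ := M * (m⁻¹ * ((M / m) * (Real.sqrt T * vbar) + Real.sqrt T * vbar)) ^ 2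
    with hCb
  apply squeeze_zero_norm' (a := fun N : ℕ => Cb / (4 * ((N : ℝ) - 1)))
  · filter_upwards [eventually_ge_atTop 2] with N hN
    rw [Real.norm_eq_abs]
    exact VCGAux.key_bound m M vbar hm hmM hvbar W V hWsymm hWlo hWhi hV Ω Ψ hΩfeas hΩopt
      hΨfeas hΨopt Γ lam p1 hΓ hlam hp1 N hN
  · have hb : Tendsto (fun N : ℕ => (N : ℝ) + (-1)) atTop atTop :=
      tendsto_atTop_add_const_right atTop (-1) tendsto_natCast_atTop_atTop
    have h1 : Tendsto (fun N : ℕ => 4 * ((N : ℝ) - 1)) atTop atTop := by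
      have h0 := Tendsto.const_mul_atTop (show (0:ℝ) < 4 by norm_num) hb
      simpa [sub_eq_add_neg] using h0
    have h2 : Tendsto (fun N : ℕ => (4 * ((N : ℝ) - 1))⁻¹) atTop (nhds 0) :=
      h1.inv_tendsto_atTop
    have h3 := h2.const_mul Cb
    rw [mul_zero] at h3
    exact h3.congr fun n => by rw [div_eq_mul_inv]
end
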